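/- arXiv:2105.14570 — 2 statements merged into one kernel-verified Lean document; each statement's English description precedes it below -/
import Mathlib

section
/- Let v be a positive harmonic function on the open upper half-plane ℍ that extends continuously to an open interval γ ⊆ ℝ with v = 0 on γ. Then for every x ∈ γ, the boundary normal derivative ∂v/∂y(x, 0) of the harmonic reflection v* exists and is strictly positive, where v* is the odd extension v*(x, y) = v(x, y) for y > 0, v*(x, 0) = 0, v*(x, y) = -v(x, -y) for y < 0, which is harmonic on ℍ ∪ γ ∪ ℍ⁻. -/
open Complex Metric Set Filter Topology intervalIntegral

local notation "conj'" => starRingEnd ℂ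

/-- Harmonicity on a set via continuity and the circle mean value property. -/
def HarmonicOnSet (u : ℂ → ℝ) (s : Set ℂ) : Prop :=
  ContinuousOn u s ∧ ∀ z ∈ s, ∀ ρ > (0 : ℝ), Metric.closedBall z ρ ⊆ s →
    u z = (2 * Real.pi)⁻¹ *
      ∫ t in (0 : ℝ)..(2 * Real.pi), u (z + (ρ : ℂ) * Complex.exp ((t : ℂ) * Complex.I))

/-- The open upper half-plane. -/
def UHP : Set ℂ := {z : ℂ | 0 < z.im}

/-- The open lower half-plane. -/
def LHP : Set ℂ := {z : ℂ | z.im < 0}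

/-- Odd (Schwarz) reflection of a function vanishing on an interval of `ℝ`. -/
noncomputable def oddReflection (v : ℂ → ℝ) (z : ℂ) : ℝ :=
  if 0 < z.im then v z else if z.im < 0 then -v (conj' z) else 0

namespace SR

/-- Strict positivity of an interval integral of a nonnegative continuous function positive
somewhere. -/
lemma integral_pos_aux {G : ℝ → ℝ} {a b t₁ : ℝ} (hab : a < b)
    (hc : ContinuousOn G (Icc a b)) (h0 : ∀ t ∈ Icc a b, 0 ≤ G t)
    (ht₁ : t₁ ∈ Icc a b) (hpos : 0 < G t₁) :
    0 < ∫ t in a..b, G t := by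
  have hcw := hc t₁ ht₁
  have hev : ∀ᶠ s in 𝓝[Icc a b] t₁, G t₁ / 2 < G s :=
    hcw (lt_mem_nhds (by linarith))
  rw [Metric.nhdsWithin_basis_ball.eventually_iff] at hev
  obtain ⟨δ, hδ, hball⟩ := hev
  simp only [mem_inter_iff, Metric.mem_ball] at hball
  set α := max a (t₁ - δ/2) with hα
  set β := min b (t₁ + δ/2) with hβ
  have ht1a := ht₁.1
  have ht1b := ht₁.2
  have hαβ : α < β := by
    simp only [hα, hβ, lt_min_iff, max_lt_iff]
    refine ⟨⟨hab, by linarith⟩, ⟨by linarith, by linarith⟩⟩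
  have hsub : Icc α β ⊆ Icc a b := Icc_subset_Icc (le_max_left _ _) (min_le_left _ _)
  have hmid : ∀ s ∈ Icc α β, G t₁ / 2 ≤ G s := by
    intro s hs
    have h1 : t₁ - δ/2 ≤ s := le_trans (le_max_right _ _) hs.1
    have h2 : s ≤ t₁ + δ/2 := le_trans hs.2 (min_le_right _ _)
    refine le_of_lt (hball ⟨?_, hsub hs⟩)
    rw [Real.dist_eq, abs_sub_lt_iff]
    constructor <;> linarith
  have hGint : IntervalIntegrable G MeasureTheory.volume a b := by
    apply ContinuousOn.intervalIntegrable
    rwa [uIcc_of_le hab.le]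
  have hint : ∀ c d : ℝ, c ∈ Icc a b → d ∈ Icc a b →
      IntervalIntegrable G MeasureTheory.volume c d := by
    intro c d hcm hdm
    refine hGint.mono_set ?_
    rw [uIcc_of_le hab.le]
    exact uIcc_subset_Icc hcm hdm
  have hαm : α ∈ Icc a b := ⟨le_max_left _ _, by apply max_le hab.le; linarith⟩
  have hβm : β ∈ Icc a b := ⟨le_min hab.le (by linarith), min_le_left _ _⟩
  have e2 : (∫ t in α..β, G t) + ∫ t in β..b, G t = ∫ t in α..b, G t :=
    integral_add_adjacent_intervals (hint _ _ hαm hβm) (hint _ _ hβm (right_mem_Icc.2 hab.le))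
  have e1 : (∫ t in a..α, G t) + ∫ t in α..b, G t = ∫ t in a..b, G t :=
    integral_add_adjacent_intervals (hint _ _ (left_mem_Icc.2 hab.le) hαm)
      (hint _ _ hαm (right_mem_Icc.2 hab.le))
  have n1 : 0 ≤ ∫ t in a..α, G t :=
    integral_nonneg hαm.1 (fun u hu => h0 u (Icc_subset_Icc le_rfl hαm.2 hu))
  have n3 : 0 ≤ ∫ t in β..b, G t :=
    integral_nonneg hβm.2 (fun u hu => h0 u (Icc_subset_Icc hβm.1 le_rfl hu))
  have n2 : (β - α) * (G t₁ / 2) ≤ ∫ t in α..β, G t := by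
    have := integral_mono_on hαβ.le (_root_.intervalIntegrable_const (c := G t₁ / 2))
      (hint _ _ hαm hβm) hmid
    rwa [intervalIntegral.integral_const, smul_eq_mul] at this
  have : 0 < (β - α) * (G t₁ / 2) := by
    apply mul_pos (by linarith) (by linarith)
  linarith

lemma integral_two_pi_sub (F : ℝ → ℝ) :
    (∫ t in (0:ℝ)..(2*Real.pi), F (2*Real.pi - t)) = ∫ t in (0:ℝ)..(2*Real.pi), F t := by
  simpa using intervalIntegral.integral_comp_sub_left F (2*Real.pi)

lemma oddReflection_conj (v : ℂ → ℝ) (z : ℂ) :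
    oddReflection v (conj' z) = - oddReflection v z := by
  rcases lt_trichotomy z.im 0 with h | h | h
  · simp only [oddReflection, Complex.conj_im]
    rw [if_pos (by linarith), if_pos h, if_neg (by linarith)]
    simp
  · simp only [oddReflection, Complex.conj_im, h]
    simp
  · simp only [oddReflection, Complex.conj_im]
    rw [if_neg (by linarith), if_pos (by linarith), if_pos h]
    simp [Complex.conj_conj]

lemma exp_two_pi_sub (t : ℝ) :
    Complex.exp ((((2*Real.pi - t : ℝ)) : ℂ) * I) = conj' (Complex.exp ((t : ℂ) * I)) := by
  rw [← Complex.exp_conj]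
  push_cast
  rw [sub_mul, Complex.exp_sub]
  rw [map_mul, Complex.conj_ofReal, Complex.conj_I]
  have h2 : Complex.exp (2 * Real.pi * I) = 1 := Complex.exp_two_pi_mul_I
  rw [h2]
  rw [mul_comm ((t:ℂ)) (-I)]
  rw [neg_mul, Complex.exp_neg, mul_comm I (t:ℂ)]
  ring

end SR

namespace SR

/-- The mean value equation over one circle. -/
def mvpEq (u : ℂ → ℝ) (z : ℂ) (ρ : ℝ) : Prop :=
  u z = (2 * Real.pi)⁻¹ *
    ∫ t in (0:ℝ)..(2*Real.pi), u (z + (ρ:ℂ) * Complex.exp ((t:ℂ) * I))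

lemma isOpen_UHP : IsOpen UHP := isOpen_lt continuous_const Complex.continuous_im

lemma isOpen_LHP : IsOpen LHP := isOpen_lt Complex.continuous_im continuous_const

lemma circle_mem_closedBall (z : ℂ) {ρ : ℝ} (hρ : 0 ≤ ρ) (t : ℝ) :
    z + (ρ:ℂ) * Complex.exp ((t:ℂ) * I) ∈ closedBall z ρ := by
  simp only [Metric.mem_closedBall, Complex.dist_eq, add_sub_cancel_left]
  rw [norm_mul, Complex.norm_real, Complex.norm_exp_ofReal_mul_I, mul_one, Real.norm_eq_abs, _root_.abs_of_nonneg hρ]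

lemma closedBall_subset_UHP {z : ℂ} {ρ : ℝ} (hz : 0 < z.im) (hρ : ρ < z.im) :
    closedBall z ρ ⊆ UHP := by
  intro ζ hζ
  simp only [Metric.mem_closedBall, Complex.dist_eq] at hζ
  have h1 : |(ζ - z).im| ≤ ‖ζ - z‖ := Complex.abs_im_le_norm _
  rw [Complex.sub_im, abs_sub_le_iff] at h1
  show 0 < ζ.im
  linarith [h1.2]

lemma closedBall_subset_LHP {z : ℂ} {ρ : ℝ} (hz : z.im < 0) (hρ : ρ < -z.im) :
    closedBall z ρ ⊆ LHP := by
  intro ζ hζ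
  simp only [Metric.mem_closedBall, Complex.dist_eq] at hζ
  have h1 : |(ζ - z).im| ≤ ‖ζ - z‖ := Complex.abs_im_le_norm _
  rw [Complex.sub_im, abs_sub_le_iff] at h1
  show ζ.im < 0
  linarith [h1.1]

variable {v : ℂ → ℝ}

lemma mvp_upper (hv : HarmonicOnSet v UHP) {z : ℂ} (hz : 0 < z.im) {ρ : ℝ}
    (h0 : 0 < ρ) (hρ : ρ < z.im) : mvpEq (oddReflection v) z ρ := by
  have hsub : closedBall z ρ ⊆ UHP := closedBall_subset_UHP hz hρ
  have hmv := hv.2 z hz ρ h0 hsub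
  unfold mvpEq
  rw [show oddReflection v z = v z from if_pos hz, hmv]
  congr 1
  apply intervalIntegral.integral_congr
  intro t _
  have hm : z + (ρ:ℂ) * Complex.exp ((t:ℂ) * I) ∈ UHP := hsub (circle_mem_closedBall z h0.le t)
  exact (if_pos hm).symm

lemma mvp_lower (hv : HarmonicOnSet v UHP) {z : ℂ} (hz : z.im < 0) {ρ : ℝ}
    (h0 : 0 < ρ) (hρ : ρ < -z.im) : mvpEq (oddReflection v) z ρ := by
  have hzc : 0 < (conj' z).im := by simp [Complex.conj_im]; linarith
  have hsubL : closedBall z ρ ⊆ LHP := closedBall_subset_LHP hz hρ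
  have hsubU : closedBall (conj' z) ρ ⊆ UHP := by
    apply closedBall_subset_UHP hzc
    simpa [Complex.conj_im] using hρ
  have hmv := hv.2 (conj' z) hzc ρ h0 hsubU
  set G : ℝ → ℝ := fun t => v (conj' z + (ρ:ℂ) * Complex.exp ((t:ℂ) * I)) with hG
  have hpt : ∀ t : ℝ, oddReflection v (z + (ρ:ℂ) * Complex.exp ((t:ℂ) * I))
      = -G (2*Real.pi - t) := by
    intro t
    have hmem : z + (ρ:ℂ) * Complex.exp ((t:ℂ) * I) ∈ LHP :=
      hsubL (circle_mem_closedBall z h0.le t)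
    have him : (z + (ρ:ℂ) * Complex.exp ((t:ℂ) * I)).im < 0 := hmem
    rw [oddReflection, if_neg (by linarith), if_pos him]
    simp only [hG]
    rw [exp_two_pi_sub]
    congr 2
    rw [map_add, map_mul, Complex.conj_ofReal]
  have : (∫ t in (0:ℝ)..(2*Real.pi), oddReflection v (z + (ρ:ℂ) * Complex.exp ((t:ℂ) * I)))
      = - ∫ t in (0:ℝ)..(2*Real.pi), G t := by
    rw [show (fun t : ℝ => oddReflection v (z + (ρ:ℂ) * Complex.exp ((t:ℂ) * I)))
        = fun t : ℝ => -G (2*Real.pi - t) from funext hpt]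
    rw [intervalIntegral.integral_neg, integral_two_pi_sub]
  unfold mvpEq
  rw [this, show oddReflection v z = -v (conj' z) by
    rw [oddReflection, if_neg (by linarith), if_pos hz], hmv]
  ring

lemma mvp_real_axis (v : ℂ → ℝ) {z : ℂ} (hz : z.im = 0) (ρ : ℝ) :
    mvpEq (oddReflection v) z ρ := by
  have hconjz : conj' z = z := Complex.conj_eq_iff_im.2 hz
  set F : ℝ → ℝ := fun t => oddReflection v (z + (ρ:ℂ) * Complex.exp ((t:ℂ) * I)) with hF
  have hpt : ∀ t : ℝ, F (2*Real.pi - t) = -F t := by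
    intro t
    simp only [hF]
    rw [exp_two_pi_sub, show z + (ρ:ℂ) * conj' (Complex.exp ((t:ℂ) * I))
        = conj' (z + (ρ:ℂ) * Complex.exp ((t:ℂ) * I)) by
      rw [map_add, map_mul, Complex.conj_ofReal, hconjz]]
    exact oddReflection_conj v _
  have h1 : (∫ t in (0:ℝ)..(2*Real.pi), F t) = - ∫ t in (0:ℝ)..(2*Real.pi), F t := by
    conv_lhs => rw [← integral_two_pi_sub F]
    rw [show (fun t : ℝ => F (2*Real.pi - t)) = fun t : ℝ => -F t from funext hpt,
      intervalIntegral.integral_neg]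
  have h2 : (∫ t in (0:ℝ)..(2*Real.pi), F t) = 0 := by linarith
  unfold mvpEq
  rw [show oddReflection v z = 0 by
    rw [oddReflection, if_neg (by rw [hz]; exact lt_irrefl 0), if_neg (by rw [hz]; exact lt_irrefl 0)]]
  rw [h2, mul_zero]

lemma contAt_upper (hv : HarmonicOnSet v UHP) {z : ℂ} (hz : z ∈ UHP) :
    ContinuousAt (oddReflection v) z := by
  have hev : ∀ᶠ ζ in 𝓝 z, v ζ = oddReflection v ζ :=
    (isOpen_UHP.eventually_mem hz).mono fun ζ hζ => (if_pos hζ).symm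
  exact (hv.1.continuousAt (isOpen_UHP.mem_nhds hz)).congr hev

lemma contAt_lower (hv : HarmonicOnSet v UHP) {z : ℂ} (hz : z ∈ LHP) :
    ContinuousAt (oddReflection v) z := by
  have hzc : conj' z ∈ UHP := by
    simp only [UHP, mem_setOf_eq, Complex.conj_im]
    exact neg_pos.2 hz
  have hc : ContinuousAt (fun ζ => -v (conj' ζ)) z := by
    exact ((hv.1.continuousAt (isOpen_UHP.mem_nhds hzc)).comp
      Complex.continuous_conj.continuousAt).neg
  apply hc.congr
  filter_upwards [isOpen_LHP.eventually_mem hz] with ζ hζ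
  exact (if_neg (by exact not_lt.2 (le_of_lt hζ))).trans (if_pos hζ) |>.symm

lemma contAt_axis {a b : ℝ} (hbdry : ∀ x ∈ Set.Ioo a b,
      Tendsto v (nhdsWithin (x : ℂ) UHP) (nhds 0))
    {z : ℂ} (hz : z.im = 0) (hre : z.re ∈ Set.Ioo a b) :
    ContinuousAt (oddReflection v) z := by
  have hzeq : ((z.re : ℝ) : ℂ) = z := Complex.ext (by simp) (by simp [hz])
  have hb := hbdry z.re hre
  rw [hzeq] at hb
  rw [Metric.tendsto_nhdsWithin_nhds] at hb
  have hwz : oddReflection v z = 0 := by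
    rw [oddReflection, if_neg (by rw [hz]; exact lt_irrefl 0),
      if_neg (by rw [hz]; exact lt_irrefl 0)]
  rw [Metric.continuousAt_iff]
  intro ε hε
  obtain ⟨δ, hδ, hδ'⟩ := hb ε hε
  refine ⟨δ, hδ, ?_⟩
  intro ζ hζ
  rw [hwz]
  rcases lt_trichotomy ζ.im 0 with h | h | h
  · rw [show oddReflection v ζ = -v (conj' ζ) by rw [oddReflection, if_neg (by linarith), if_pos h]]
    have h1 : conj' ζ ∈ UHP := by
      simp only [UHP, mem_setOf_eq, Complex.conj_im]; linarith
    have h2 : dist (conj' ζ) z < δ := by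
      have : conj' z = z := Complex.conj_eq_iff_im.2 hz
      calc dist (conj' ζ) z = dist (conj' ζ) (conj' z) := by rw [this]
        _ = dist ζ z := by
            simp only [Complex.dist_eq, ← map_sub, Complex.norm_conj]
        _ < δ := hζ
    have := hδ' h1 h2
    simpa [Real.dist_eq, abs_neg] using this
  · rw [show oddReflection v ζ = 0 by
      rw [oddReflection, if_neg (by rw [h]; exact lt_irrefl 0),
        if_neg (by rw [h]; exact lt_irrefl 0)]]
    simpa using hε
  · rw [show oddReflection v ζ = v ζ from if_pos h]
    exact hδ' h hζ

end SR

namespace SR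

noncomputable def ksi (R t : ℝ) : ℂ := (R:ℂ) * Complex.exp ((t:ℂ) * I)

noncomputable def bf (u : ℂ → ℝ) (c : ℂ) (R : ℝ) (t : ℝ) : ℝ := u (c + ksi R t)

noncomputable def ker (c : ℂ) (R : ℝ) (z : ℂ) (t : ℝ) : ℂ :=
  (ksi R t + (z - c)) / (ksi R t - (z - c))

noncomputable def kerD (c : ℂ) (R : ℝ) (z : ℂ) (t : ℝ) : ℂ :=
  2 * ksi R t / (ksi R t - (z - c))^2

noncomputable def pg (u : ℂ → ℝ) (c : ℂ) (R : ℝ) (z : ℂ) : ℂ :=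
  (2*Real.pi : ℂ)⁻¹ * ∫ t in (0:ℝ)..(2*Real.pi), (bf u c R t : ℂ) * ker c R z t

noncomputable def pP (u : ℂ → ℝ) (c : ℂ) (R : ℝ) (z : ℂ) : ℝ := (pg u c R z).re

variable {c : ℂ} {R : ℝ} {u : ℂ → ℝ}

lemma abs_ksi (hR : 0 ≤ R) (t : ℝ) : ‖ksi R t‖ = R := by
  rw [ksi, norm_mul, Complex.norm_real, Complex.norm_exp_ofReal_mul_I, mul_one, Real.norm_eq_abs, _root_.abs_of_nonneg hR]

lemma ksi_ne (hR : 0 < R) (t : ℝ) : ksi R t ≠ 0 := by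
  intro h
  have := abs_ksi hR.le t
  rw [h] at this
  simp at this
  linarith

lemma denom_ne (hR : 0 < R) {z : ℂ} (hz : z ∈ ball c R) (t : ℝ) :
    ksi R t - (z - c) ≠ 0 := by
  intro h
  have h1 : ksi R t = z - c := by linear_combination h
  have h2 := abs_ksi hR.le t
  rw [h1] at h2
  rw [mem_ball, Complex.dist_eq] at hz
  rw [h2] at hz
  exact lt_irrefl R hz

@[fun_prop]
lemma continuous_ksi : Continuous (ksi R) := by
  unfold ksi
  fun_prop

lemma continuous_bf (hR : 0 < R) (hu : ContinuousOn u (closedBall c R)) :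
    Continuous (bf u c R) := by
  apply hu.comp_continuous (by fun_prop : Continuous fun t : ℝ => c + ksi R t)
  intro t
  simp only [Metric.mem_closedBall, Complex.dist_eq, add_sub_cancel_left]
  rw [abs_ksi hR.le]

lemma continuous_ker_t (hR : 0 < R) {z : ℂ} (hz : z ∈ ball c R) :
    Continuous (fun t => ker c R z t) := by
  apply Continuous.div (by fun_prop) (by fun_prop)
  exact fun t => denom_ne hR hz t

lemma continuous_kerD_t (hR : 0 < R) {z : ℂ} (hz : z ∈ ball c R) :
    Continuous (fun t => kerD c R z t) := by
  apply Continuous.div (by fun_prop) (by fun_prop)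
  exact fun t => pow_ne_zero 2 (denom_ne hR hz t)

lemma intInt_bf_ker (hR : 0 < R) (hu : ContinuousOn u (closedBall c R)) {z : ℂ}
    (hz : z ∈ ball c R) :
    IntervalIntegrable (fun t => (bf u c R t : ℂ) * ker c R z t)
      MeasureTheory.volume 0 (2*Real.pi) :=
  (Continuous.mul (Complex.continuous_ofReal.comp (continuous_bf hR hu))
    (continuous_ker_t hR hz)).intervalIntegrable _ _

lemma hasDerivAt_ker (hR : 0 < R) {z₀ : ℂ} (hz : z₀ ∈ ball c R) (t : ℝ) :
    HasDerivAt (fun z => ker c R z t) (kerD c R z₀ t) z₀ := by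
  have h1 : HasDerivAt (fun z : ℂ => ksi R t + (z - c)) 1 z₀ :=
    ((hasDerivAt_id z₀).sub_const c).const_add (ksi R t)
  have h2 : HasDerivAt (fun z : ℂ => ksi R t - (z - c)) (-1) z₀ := by
    simpa using ((hasDerivAt_id z₀).sub_const c).const_sub (ksi R t)
  have hne := denom_ne hR hz t
  have := h1.div h2 hne
  refine this.congr_deriv ?_
  unfold kerD
  field_simp
  ring

lemma hasDerivAt_pg (hR : 0 < R) (hu : ContinuousOn u (closedBall c R)) {z₀ : ℂ}
    (hz₀ : z₀ ∈ ball c R) :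
    HasDerivAt (pg u c R)
      ((2*Real.pi : ℂ)⁻¹ * ∫ t in (0:ℝ)..(2*Real.pi), (bf u c R t : ℂ) * kerD c R z₀ t) z₀ := by
  obtain ⟨C, hC⟩ : ∃ C, ∀ t : ℝ, |bf u c R t| ≤ C := by
    obtain ⟨C, hC⟩ := (isCompact_closedBall c R).exists_bound_of_continuousOn hu
    exact ⟨C, fun t => by
      have := hC (c + ksi R t) (by
        simp only [Metric.mem_closedBall, Complex.dist_eq, add_sub_cancel_left]
        rw [abs_ksi hR.le])
      simpa [bf] using this⟩
  set ε := (R - dist z₀ c)/2 with hε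
  have hd0 : dist z₀ c < R := mem_ball.1 hz₀
  have hεpos : 0 < ε := by rw [hε]; linarith
  have hball : ∀ x ∈ ball z₀ ε, x ∈ ball c R ∧ ∀ t : ℝ, ε ≤ ‖ksi R t - (x - c)‖ := by
    intro x hx
    have hxz : dist x z₀ < ε := mem_ball.1 hx
    have hxc : dist x c < R := by
      calc dist x c ≤ dist x z₀ + dist z₀ c := dist_triangle _ _ _
        _ < ε + dist z₀ c := by linarith
        _ ≤ R := by rw [hε]; linarith
    refine ⟨mem_ball.2 hxc, fun t => ?_⟩
    have h1 : ‖x - c‖ ≤ dist z₀ c + ε := by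
      calc ‖x - c‖ = dist x c := (Complex.dist_eq x c).symm
        _ ≤ dist x z₀ + dist z₀ c := dist_triangle _ _ _
        _ ≤ dist z₀ c + ε := by linarith
    have h2 : R - (dist z₀ c + ε) = ε := by rw [hε]; ring
    calc ε = R - (dist z₀ c + ε) := h2.symm
      _ ≤ ‖ksi R t‖ - ‖x - c‖ := by
          rw [abs_ksi hR.le]; linarith
      _ ≤ ‖ksi R t - (x - c)‖ := by
          have := norm_sub_norm_le (ksi R t) (x - c)
          simpa using this
  have key := intervalIntegral.hasDerivAt_integral_of_dominated_loc_of_deriv_le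
    (F := fun z t => (bf u c R t : ℂ) * ker c R z t)
    (F' := fun z t => (bf u c R t : ℂ) * kerD c R z t)
    (x₀ := z₀) (a := 0) (b := 2*Real.pi) (μ := MeasureTheory.volume)
    (bound := fun _ => C * (2*R/ε^2)) (ball_mem_nhds z₀ hεpos)
    ?_ ?_ ?_ ?_ ?_ ?_
  · exact (key.2.const_mul _)
  · filter_upwards [isOpen_ball.eventually_mem hz₀] with x hx
    exact ((Continuous.mul (Complex.continuous_ofReal.comp (continuous_bf hR hu))
      (continuous_ker_t hR hx)).aestronglyMeasurable).restrict
  · exact intInt_bf_ker hR hu hz₀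
  · exact ((Continuous.mul (Complex.continuous_ofReal.comp (continuous_bf hR hu))
      (continuous_kerD_t hR hz₀)).aestronglyMeasurable).restrict
  · apply MeasureTheory.ae_of_all
    intro t _ x hx
    obtain ⟨hx1, hx2⟩ := hball x hx
    rw [norm_mul]
    have hb : ‖((bf u c R t : ℝ) : ℂ)‖ ≤ C := by
      rw [Complex.norm_real, Real.norm_eq_abs]; exact hC t
    have hk : ‖kerD c R x t‖ ≤ 2*R/ε^2 := by
      rw [kerD, norm_div, norm_pow]
      apply div_le_div₀ (by positivity)
      · rw [norm_mul, abs_ksi hR.le]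
        simp
      · positivity
      · apply pow_le_pow_left₀ hεpos.le
        exact hx2 t
    exact mul_le_mul hb hk (norm_nonneg _) (le_trans (abs_nonneg _) (hC 0))
  · exact _root_.intervalIntegrable_const
  · apply MeasureTheory.ae_of_all
    intro t _ x hx
    exact (hasDerivAt_ker hR (hball x hx).1 t).const_mul _

end SR

namespace SR

variable {c : ℂ} {R : ℝ} {u : ℂ → ℝ}

lemma re_intervalIntegral {F : ℝ → ℂ} {a b : ℝ}
    (hF : IntervalIntegrable F MeasureTheory.volume a b) :
    (∫ t in a..b, F t).re = ∫ t in a..b, (F t).re := by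
  simpa using (Complex.reCLM.intervalIntegral_comp_comm hF).symm

lemma im_intervalIntegral {F : ℝ → ℂ} {a b : ℝ}
    (hF : IntervalIntegrable F MeasureTheory.volume a b) :
    (∫ t in a..b, F t).im = ∫ t in a..b, (F t).im := by
  simpa using (Complex.imCLM.intervalIntegral_comp_comm hF).symm

/-- Mean value property for functions holomorphic on a disc, continuous on its closure. -/
lemma mvp_holo {g : ℂ → ℂ} {z : ℂ} {ρ : ℝ} (hρ : 0 < ρ) (hd : DiffContOnCl ℂ g (ball z ρ)) :
    g z = (2*Real.pi : ℂ)⁻¹ *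
      ∫ t in (0:ℝ)..(2*Real.pi), g (z + (ρ:ℂ) * Complex.exp ((t:ℂ) * I)) := by
  have h := hd.circleIntegral_sub_inv_smul (mem_ball_self hρ)
  rw [circleIntegral] at h
  have hcongr : (fun θ : ℝ => deriv (circleMap z ρ) θ • ((circleMap z ρ θ - z)⁻¹ • g (circleMap z ρ θ)))
      = fun θ : ℝ => I * g (z + (ρ:ℂ) * Complex.exp ((θ:ℂ) * I)) := by
    funext θ
    rw [deriv_circleMap]
    have h1 : circleMap z ρ θ - z = (ρ:ℂ) * Complex.exp ((θ:ℂ) * I) := by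
      simp [circleMap]
    have h2 : circleMap 0 ρ θ = (ρ:ℂ) * Complex.exp ((θ:ℂ) * I) := by simp [circleMap]
    have h3 : circleMap z ρ θ = z + (ρ:ℂ) * Complex.exp ((θ:ℂ) * I) := by simp [circleMap]
    rw [h1, h2, h3, smul_eq_mul, smul_eq_mul]
    have hne : (ρ:ℂ) * Complex.exp ((θ:ℂ) * I) ≠ 0 :=
      mul_ne_zero (by exact_mod_cast hρ.ne') (Complex.exp_ne_zero _)
    have hρne : (ρ:ℂ) ≠ 0 := by exact_mod_cast hρ.ne'
    field_simp
  rw [hcongr, intervalIntegral.integral_const_mul] at h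
  have h2π : (2*Real.pi : ℂ) ≠ 0 := by
    simp only [ne_eq, mul_eq_zero, not_or]
    refine ⟨by norm_num, ?_⟩
    exact_mod_cast Real.pi_ne_zero
  have h' : (∫ t in (0:ℝ)..(2*Real.pi), g (z + (ρ:ℂ) * Complex.exp ((t:ℂ) * I)))
      = 2*Real.pi * g z := by
    apply mul_left_cancel₀ Complex.I_ne_zero
    rw [h, smul_eq_mul]
    ring
  rw [h']
  field_simp

end SR

namespace SR

variable {c : ℂ} {R : ℝ} {u : ℂ → ℝ}

lemma continuousOn_pg (hR : 0 < R) (hu : ContinuousOn u (closedBall c R)) :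
    ContinuousOn (pg u c R) (ball c R) := fun _ hz =>
  ((hasDerivAt_pg hR hu hz).continuousAt).continuousWithinAt

lemma continuousOn_pP (hR : 0 < R) (hu : ContinuousOn u (closedBall c R)) :
    ContinuousOn (pP u c R) (ball c R) :=
  Complex.continuous_re.comp_continuousOn (continuousOn_pg hR hu)

lemma mvp_pP (hR : 0 < R) (hu : ContinuousOn u (closedBall c R)) {z : ℂ} {ρ : ℝ}
    (hρ : 0 < ρ) (hsub : closedBall z ρ ⊆ ball c R) :
    pP u c R z = (2*Real.pi)⁻¹ *
      ∫ t in (0:ℝ)..(2*Real.pi), pP u c R (z + (ρ:ℂ) * Complex.exp ((t:ℂ) * I)) := by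
  have hdc : DiffContOnCl ℂ (pg u c R) (ball z ρ) := by
    constructor
    · intro x hx
      exact (hasDerivAt_pg hR hu (hsub (ball_subset_closedBall hx))).differentiableAt.differentiableWithinAt
    · rw [closure_ball z hρ.ne']
      exact (continuousOn_pg hR hu).mono hsub
  have h := mvp_holo hρ hdc
  have hcont : Continuous fun t : ℝ => pg u c R (z + (ρ:ℂ) * Complex.exp ((t:ℂ) * I)) := by
    apply (continuousOn_pg hR hu).comp_continuous (by fun_prop)
    intro t
    exact hsub (circle_mem_closedBall z hρ.le t)
  have hint : IntervalIntegrable (fun t : ℝ => pg u c R (z + (ρ:ℂ) * Complex.exp ((t:ℂ) * I)))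
      MeasureTheory.volume 0 (2*Real.pi) := hcont.intervalIntegrable _ _
  unfold pP
  rw [h]
  rw [show (2*Real.pi : ℂ)⁻¹ = (((2*Real.pi)⁻¹ : ℝ) : ℂ) by push_cast; ring]
  rw [Complex.re_ofReal_mul, re_intervalIntegral hint]

lemma pP_center (hR : 0 < R) (hu : ContinuousOn u (closedBall c R)) :
    pP u c R c = (2*Real.pi)⁻¹ * ∫ t in (0:ℝ)..(2*Real.pi), bf u c R t := by
  have hker : ∀ t : ℝ, ker c R c t = 1 := by
    intro t
    rw [ker, sub_self, sub_zero, add_zero, div_self (ksi_ne hR t)]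
  have : pg u c R c = (2*Real.pi : ℂ)⁻¹ * ∫ t in (0:ℝ)..(2*Real.pi), (bf u c R t : ℂ) := by
    unfold pg
    congr 1
    apply intervalIntegral.integral_congr
    intro t _
    show (bf u c R t : ℂ) * ker c R c t = _
    rw [hker t, mul_one]
  have hbint : IntervalIntegrable (fun t : ℝ => ((bf u c R t : ℝ) : ℂ))
      MeasureTheory.volume 0 (2*Real.pi) :=
    (Complex.continuous_ofReal.comp (continuous_bf hR hu)).intervalIntegrable _ _
  unfold pP
  rw [this, show (2*Real.pi : ℂ)⁻¹ = (((2*Real.pi)⁻¹ : ℝ) : ℂ) by push_cast; ring,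
    Complex.re_ofReal_mul, re_intervalIntegral hbint]
  simp

lemma integral_exp_neg_I : (∫ t in (0:ℝ)..(2*Real.pi), Complex.exp ((-I) * (t:ℂ))) = 0 := by
  rw [integral_exp_mul_complex (by simp [Complex.I_ne_zero] : (-I : ℂ) ≠ 0)]
  have : Complex.exp (-I * (2*Real.pi : ℝ)) = 1 := by
    push_cast
    rw [show (-I * (2*(Real.pi:ℂ))) = -(2*Real.pi*I) by ring, Complex.exp_neg,
      Complex.exp_two_pi_mul_I]
    norm_num
  rw [this]
  simp

lemma integral_inv_ksi_sub (hR : 0 < R) {w : ℂ} (hw : ‖w‖ < R) :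
    (∫ t in (0:ℝ)..(2*Real.pi), (ksi R t - w)⁻¹) = 0 := by
  by_cases hw0 : w = 0
  · subst hw0
    have : ∀ t : ℝ, (ksi R t - 0)⁻¹ = (R:ℂ)⁻¹ * Complex.exp ((-I) * (t:ℂ)) := by
      intro t
      rw [sub_zero, ksi, mul_inv, ← Complex.exp_neg]
      congr 2
      ring
    rw [intervalIntegral.integral_congr (fun t _ => this t),
      intervalIntegral.integral_const_mul, integral_exp_neg_I, mul_zero]
  · have hwball : w ∈ ball (0:ℂ) R := by
      rw [mem_ball, Complex.dist_eq, sub_zero]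
      exact hw
    have hA := circleIntegral.integral_sub_inv_of_mem_ball hwball
    rw [circleIntegral] at hA
    have hcongr : (fun θ : ℝ => deriv (circleMap 0 R) θ • ((circleMap 0 R θ - w)⁻¹))
        = fun θ : ℝ => ksi R θ * I * (ksi R θ - w)⁻¹ := by
      funext θ
      rw [deriv_circleMap, smul_eq_mul]
      have h2 : circleMap 0 R θ = ksi R θ := by simp [circleMap, ksi]
      rw [h2]
    rw [hcongr] at hA
    have hdne : ∀ t : ℝ, ksi R t - w ≠ 0 := by
      intro t h
      have h1 : ksi R t = w := by linear_combination h
      rw [← h1] at hw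
      rw [abs_ksi hR.le] at hw
      exact lt_irrefl R hw
    have hpoint : ∀ t : ℝ, (ksi R t - w)⁻¹
        = (w * I)⁻¹ * (ksi R t * I * (ksi R t - w)⁻¹ - I) := by
      intro t
      have := hdne t
      field_simp
      ring
    rw [intervalIntegral.integral_congr (fun t _ => hpoint t),
      intervalIntegral.integral_const_mul]
    have hcont : Continuous fun t : ℝ => ksi R t * I * (ksi R t - w)⁻¹ := by
      apply Continuous.mul (by fun_prop)
      exact Continuous.inv₀ (by fun_prop) hdne
    rw [intervalIntegral.integral_sub (hcont.intervalIntegrable _ _)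
      (continuous_const.intervalIntegrable _ _)]
    rw [hA, intervalIntegral.integral_const]
    rw [show (2*Real.pi - 0 : ℝ) • (I:ℂ) = 2 * (Real.pi:ℂ) * I by
      rw [sub_zero, real_smul]; push_cast; ring]
    simp

lemma integral_ker (hR : 0 < R) {z : ℂ} (hz : z ∈ ball c R) :
    (∫ t in (0:ℝ)..(2*Real.pi), ker c R z t) = 2*Real.pi := by
  have hw : ‖z - c‖ < R := by
    rw [← Complex.dist_eq]
    exact mem_ball.1 hz
  have hpoint : ∀ t : ℝ, ker c R z t = 1 + (2*(z-c)) * (ksi R t - (z-c))⁻¹ := by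
    intro t
    have hne := denom_ne hR hz t
    rw [ker]
    field_simp
    ring
  rw [intervalIntegral.integral_congr (fun t _ => hpoint t)]
  have hcont : Continuous fun t : ℝ => (2*(z-c)) * (ksi R t - (z-c))⁻¹ := by
    apply continuous_const.mul
    exact Continuous.inv₀ (by fun_prop) (denom_ne hR hz)
  rw [intervalIntegral.integral_add (continuous_const.intervalIntegrable _ _)
    (hcont.intervalIntegrable _ _)]
  rw [intervalIntegral.integral_const_mul, integral_inv_ksi_sub hR hw, mul_zero, add_zero]
  rw [intervalIntegral.integral_const]
  simp [Real.pi_pos.le]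

end SR

namespace SR

variable {c : ℂ} {R : ℝ} {u : ℂ → ℝ}

noncomputable def pk (c : ℂ) (R : ℝ) (z : ℂ) (t : ℝ) : ℝ := (ker c R z t).re

lemma normSq_ksi (hR : 0 ≤ R) (t : ℝ) : Complex.normSq (ksi R t) = R^2 := by
  rw [Complex.normSq_eq_norm_sq, abs_ksi hR]

lemma pk_eq (hR : 0 < R) {z : ℂ} (t : ℝ) :
    pk c R z t = (R^2 - Complex.normSq (z - c)) / Complex.normSq (ksi R t - (z - c)) := by
  rw [pk, ker, Complex.div_re, ← add_div]
  congr 1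
  have hξ : (ksi R t).re * (ksi R t).re + (ksi R t).im * (ksi R t).im = R^2 := by
    have := normSq_ksi hR.le t
    rwa [Complex.normSq_apply] at this
  simp only [Complex.add_re, Complex.add_im, Complex.sub_re, Complex.sub_im, Complex.normSq_apply]
  ring_nf
  ring_nf at hξ
  linarith

lemma pk_nonneg (hR : 0 < R) {z : ℂ} (hz : z ∈ ball c R) (t : ℝ) : 0 ≤ pk c R z t := by
  rw [pk_eq hR]
  apply div_nonneg _ (Complex.normSq_nonneg _)
  have : Complex.normSq (z - c) ≤ R^2 := by
    rw [Complex.normSq_eq_norm_sq]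
    have : ‖z - c‖ < R := by rw [← Complex.dist_eq]; exact mem_ball.1 hz
    nlinarith [norm_nonneg (z - c)]
  linarith

lemma pk_mass (hR : 0 < R) {z : ℂ} (hz : z ∈ ball c R) :
    (∫ t in (0:ℝ)..(2*Real.pi), pk c R z t) = 2*Real.pi := by
  have hint : IntervalIntegrable (fun t => ker c R z t) MeasureTheory.volume 0 (2*Real.pi) :=
    (continuous_ker_t hR hz).intervalIntegrable _ _
  have := re_intervalIntegral hint
  rw [integral_ker hR hz] at this
  rw [show (∫ t in (0:ℝ)..(2*Real.pi), pk c R z t)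
    = ∫ t in (0:ℝ)..(2*Real.pi), (ker c R z t).re from rfl, ← this]
  simp

lemma pP_eq (hR : 0 < R) (hu : ContinuousOn u (closedBall c R)) {z : ℂ} (hz : z ∈ ball c R) :
    pP u c R z = (2*Real.pi)⁻¹ * ∫ t in (0:ℝ)..(2*Real.pi), bf u c R t * pk c R z t := by
  unfold pP pg
  rw [show (2*Real.pi : ℂ)⁻¹ = (((2*Real.pi)⁻¹ : ℝ) : ℂ) by push_cast; ring,
    Complex.re_ofReal_mul, re_intervalIntegral (intInt_bf_ker hR hu hz)]
  congr 1
  apply intervalIntegral.integral_congr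
  intro t _
  exact Complex.re_ofReal_mul _ _

/-- Boundary continuity of the Poisson integral. -/
lemma tendsto_pP (hR : 0 < R) (hu : ContinuousOn u (closedBall c R)) {ξ₀ : ℂ}
    (hξ₀ : ξ₀ ∈ sphere c R) :
    Tendsto (pP u c R) (𝓝[ball c R] ξ₀) (𝓝 (u ξ₀)) := by
  obtain ⟨C, hC0, hC⟩ : ∃ C, 0 ≤ C ∧ ∀ x ∈ closedBall c R, |u x| ≤ C := by
    obtain ⟨C, hC⟩ := (isCompact_closedBall c R).exists_bound_of_continuousOn hu
    exact ⟨C, le_trans (abs_nonneg _) (by simpa using hC c (mem_closedBall_self hR.le)),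
      fun x hx => by simpa using hC x hx⟩
  have hucont : UniformContinuousOn u (closedBall c R) :=
    (isCompact_closedBall c R).uniformContinuousOn_of_continuous hu
  rw [Metric.tendsto_nhdsWithin_nhds]
  intro ε hε
  rw [Metric.uniformContinuousOn_iff] at hucont
  obtain ⟨δ, hδ, hδ'⟩ := hucont (ε/3) (by linarith)
  set δ₂ := min (δ/2) (ε * δ^2 / (64 * R * (C+1))) with hδ₂def
  have hδ₂pos : 0 < δ₂ := by
    apply lt_min (by linarith)
    positivity
  refine ⟨δ₂, hδ₂pos, ?_⟩
  intro z hz hdist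
  have hzball := hz
  rw [mem_ball] at hzball
  -- key pointwise bound
  have hξ₀m : ξ₀ ∈ closedBall c R := sphere_subset_closedBall hξ₀
  have hfar : ∀ t : ℝ, pk c R z t * |bf u c R t - u ξ₀| ≤
      (ε/3) * pk c R z t + (R^2 - Complex.normSq (z - c)) * (4/δ^2) * (2*C) := by
    intro t
    have hbm : c + ksi R t ∈ closedBall c R := by
      simp only [Metric.mem_closedBall, Complex.dist_eq, add_sub_cancel_left]
      rw [abs_ksi hR.le]
    by_cases hcase : dist (c + ksi R t) ξ₀ < δ
    · have h1 : |bf u c R t - u ξ₀| ≤ ε/3 := by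
        have := hδ' (c + ksi R t) hbm ξ₀ hξ₀m hcase
        rw [Real.dist_eq] at this
        exact this.le
      have h2 : pk c R z t * |bf u c R t - u ξ₀| ≤ pk c R z t * (ε/3) :=
        mul_le_mul_of_nonneg_left h1 (pk_nonneg hR hz t)
      have h3 : 0 ≤ (R^2 - Complex.normSq (z - c)) * (4/δ^2) * (2*C) := by
        apply mul_nonneg (mul_nonneg _ (by positivity)) (by linarith)
        have : Complex.normSq (z - c) ≤ R^2 := by
          rw [Complex.normSq_eq_norm_sq]
          have : ‖z - c‖ < R := by rw [← Complex.dist_eq]; exact hzball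
          nlinarith [norm_nonneg (z - c)]
        linarith
      linarith [h2, h3, mul_comm (pk c R z t) (ε/3)]
    · -- far case : kernel small
      push_neg at hcase
      have hzd : dist z ξ₀ < δ/2 := lt_of_lt_of_le hdist (min_le_left _ _)
      have hdz : δ/2 ≤ dist (c + ksi R t) z := by
        have := dist_triangle (c + ksi R t) z ξ₀
        have h2 : dist (c + ksi R t) ξ₀ ≤ dist (c + ksi R t) z + dist z ξ₀ := this
        linarith
      have hnormSq : (δ/2)^2 ≤ Complex.normSq (ksi R t - (z - c)) := by
        have h1 : Complex.normSq (ksi R t - (z - c)) = (dist (c + ksi R t) z)^2 := by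
          rw [Complex.dist_eq, Complex.sq_norm]
          congr 1
          ring_nf
        rw [h1]
        apply pow_le_pow_left₀ (by linarith) hdz
      have hpkb : pk c R z t ≤ (R^2 - Complex.normSq (z - c)) * (4/δ^2) := by
        rw [pk_eq hR]
        rw [div_eq_mul_inv]
        apply mul_le_mul_of_nonneg_left _ (by
          have : Complex.normSq (z - c) ≤ R^2 := by
            rw [Complex.normSq_eq_norm_sq]
            have : ‖z - c‖ < R := by rw [← Complex.dist_eq]; exact hzball
            nlinarith [norm_nonneg (z - c)]
          linarith)
        rw [show (4:ℝ)/δ^2 = ((δ/2)^2)⁻¹ by field_simp; ring]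
        apply inv_anti₀ (by positivity) hnormSq
      have habs : |bf u c R t - u ξ₀| ≤ 2*C := by
        have h1 : |bf u c R t| ≤ C := hC _ hbm
        have h2 : |u ξ₀| ≤ C := hC _ hξ₀m
        calc |bf u c R t - u ξ₀| ≤ |bf u c R t| + |u ξ₀| := abs_sub _ _
          _ ≤ 2*C := by linarith
      have h4 : pk c R z t * |bf u c R t - u ξ₀| ≤
          ((R^2 - Complex.normSq (z - c)) * (4/δ^2)) * (2*C) :=
        mul_le_mul hpkb habs (abs_nonneg _) (by
          apply mul_nonneg _ (by positivity)
          have : Complex.normSq (z - c) ≤ R^2 := by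
            rw [Complex.normSq_eq_norm_sq]
            have : ‖z - c‖ < R := by rw [← Complex.dist_eq]; exact hzball
            nlinarith [norm_nonneg (z - c)]
          linarith)
      have h5 : 0 ≤ (ε/3) * pk c R z t :=
        mul_nonneg (by linarith) (pk_nonneg hR hz t)
      linarith
  -- assemble
  have h2πpos : (0:ℝ) < 2*Real.pi := by positivity
  have hkcont : Continuous fun t => pk c R z t :=
    Complex.continuous_re.comp (continuous_ker_t hR hz)
  have hbfc : Continuous (bf u c R) := continuous_bf hR hu
  have hintbfpk : IntervalIntegrable (fun t => (bf u c R t - u ξ₀) * pk c R z t)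
      MeasureTheory.volume 0 (2*Real.pi) :=
    (((hbfc.sub continuous_const).mul hkcont)).intervalIntegrable _ _
  have hrepr : pP u c R z - u ξ₀ = (2*Real.pi)⁻¹ *
      ∫ t in (0:ℝ)..(2*Real.pi), (bf u c R t - u ξ₀) * pk c R z t := by
    rw [pP_eq hR hu hz]
    have h2 : (∫ t in (0:ℝ)..(2*Real.pi), (bf u c R t - u ξ₀) * pk c R z t)
        = (∫ t in (0:ℝ)..(2*Real.pi), bf u c R t * pk c R z t) - 2*Real.pi * u ξ₀ := by
      rw [show (fun t => (bf u c R t - u ξ₀) * pk c R z t)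
          = fun t => bf u c R t * pk c R z t - u ξ₀ * pk c R z t from
        funext fun t => by ring]
      rw [intervalIntegral.integral_sub ((show Continuous fun t => bf u c R t * pk c R z t from hbfc.mul hkcont).intervalIntegrable _ _)
        ((show Continuous fun t => u ξ₀ * pk c R z t from continuous_const.mul hkcont).intervalIntegrable _ _),
        intervalIntegral.integral_const_mul, pk_mass hR hz]
      ring
    rw [h2]
    field_simp
  have hbnd : |pP u c R z - u ξ₀| ≤ ε/3 + (R^2 - Complex.normSq (z - c)) * (4/δ^2) * (2*C) := by
    rw [hrepr, abs_mul, _root_.abs_of_nonneg (by positivity : (0:ℝ) ≤ (2*Real.pi)⁻¹)]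
    have step1 : |∫ t in (0:ℝ)..(2*Real.pi), (bf u c R t - u ξ₀) * pk c R z t|
        ≤ ∫ t in (0:ℝ)..(2*Real.pi), |(bf u c R t - u ξ₀) * pk c R z t| :=
      intervalIntegral.abs_integral_le_integral_abs (by positivity)
    have step2 : (∫ t in (0:ℝ)..(2*Real.pi), |(bf u c R t - u ξ₀) * pk c R z t|)
        ≤ ∫ t in (0:ℝ)..(2*Real.pi),
            ((ε/3) * pk c R z t + (R^2 - Complex.normSq (z - c)) * (4/δ^2) * (2*C)) := by
      apply intervalIntegral.integral_mono_on h2πpos.le (hintbfpk.abs)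
        ((show Continuous fun t => (ε/3) * pk c R z t + (R^2 - Complex.normSq (z - c)) * (4/δ^2) * (2*C) from (continuous_const.mul hkcont).add continuous_const).intervalIntegrable _ _)
      intro t _
      rw [abs_mul, _root_.abs_of_nonneg (pk_nonneg hR hz t)]
      have h := hfar t
      have hcm : |bf u c R t - u ξ₀| * pk c R z t = pk c R z t * |bf u c R t - u ξ₀| :=
        mul_comm _ _
      linarith
    have step3 : (∫ t in (0:ℝ)..(2*Real.pi),
          ((ε/3) * pk c R z t + (R^2 - Complex.normSq (z - c)) * (4/δ^2) * (2*C)))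
        = (ε/3) * (2*Real.pi) + (2*Real.pi) * ((R^2 - Complex.normSq (z - c)) * (4/δ^2) * (2*C)) := by
      rw [intervalIntegral.integral_add ((show Continuous fun t => (ε/3) * pk c R z t from continuous_const.mul hkcont).intervalIntegrable _ _)
        (continuous_const.intervalIntegrable _ _),
        intervalIntegral.integral_const_mul, pk_mass hR hz, intervalIntegral.integral_const]
      simp only [sub_zero, smul_eq_mul]
    have hiq : |∫ t in (0:ℝ)..(2*Real.pi), (bf u c R t - u ξ₀) * pk c R z t|
        ≤ (ε/3) * (2*Real.pi) + (2*Real.pi) * ((R^2 - Complex.normSq (z - c)) * (4/δ^2) * (2*C)) := by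
      rw [← step3]
      exact le_trans step1 step2
    calc (2*Real.pi)⁻¹ * |∫ t in (0:ℝ)..(2*Real.pi), (bf u c R t - u ξ₀) * pk c R z t|
        ≤ (2*Real.pi)⁻¹ * ((ε/3) * (2*Real.pi)
            + (2*Real.pi) * ((R^2 - Complex.normSq (z - c)) * (4/δ^2) * (2*C))) :=
          mul_le_mul_of_nonneg_left hiq (by positivity)
      _ = ε/3 + (R^2 - Complex.normSq (z - c)) * (4/δ^2) * (2*C) := by
          have : Real.pi ≠ 0 := Real.pi_ne_zero
          field_simp
  have hAbound : R^2 - Complex.normSq (z - c) ≤ 2*R*δ₂ := by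
    have habsz : ‖z - c‖ ≤ R := by
      rw [← Complex.dist_eq]; exact (mem_ball.1 hz).le
    have h1 : R - ‖z - c‖ ≤ dist z ξ₀ := by
      have hRd : dist ξ₀ c = R := mem_sphere.1 hξ₀
      have htri : dist ξ₀ c ≤ dist ξ₀ z + dist z c := dist_triangle _ _ _
      rw [hRd] at htri
      rw [Complex.dist_eq z c] at htri
      rw [dist_comm z ξ₀]
      linarith
    have h2 : dist z ξ₀ ≤ δ₂ := hdist.le
    rw [Complex.normSq_eq_norm_sq]
    nlinarith [norm_nonneg (z - c)]
  have hfinal : (R^2 - Complex.normSq (z - c)) * (4/δ^2) * (2*C) ≤ ε/2 := by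
    have hδ₂le : δ₂ ≤ ε*δ^2/(64*R*(C+1)) := min_le_right _ _
    have hAnn : 0 ≤ 2*R*δ₂ := by positivity
    calc (R^2 - Complex.normSq (z - c)) * (4/δ^2) * (2*C)
        ≤ (2*R*δ₂) * (4/δ^2) * (2*C) := by
          apply mul_le_mul_of_nonneg_right (mul_le_mul_of_nonneg_right hAbound (by positivity))
            (by linarith)
      _ ≤ (2*R*(ε*δ^2/(64*R*(C+1)))) * (4/δ^2) * (2*C) := by
          apply mul_le_mul_of_nonneg_right (mul_le_mul_of_nonneg_right _ (by positivity))
            (by linarith)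
          apply mul_le_mul_of_nonneg_left hδ₂le (by positivity)
      _ = ε * (C/(C+1)) / 4 := by
          field_simp
          ring
      _ ≤ ε/2 := by
          rw [div_le_div_iff₀ (by norm_num) (by norm_num)]
          have hCC : C/(C+1) ≤ 1 := by
            rw [div_le_one (by linarith)]
            linarith
          nlinarith
  rw [Real.dist_eq]
  calc |pP u c R z - u ξ₀| ≤ ε/3 + (R^2 - Complex.normSq (z - c)) * (4/δ^2) * (2*C) := hbnd
    _ ≤ ε/3 + ε/2 := by linarith
    _ < ε := by linarith

end SR

namespace SR

lemma exists_angle {w : ℂ} (hw : w ≠ 0) :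
    ∃ t ∈ Icc (0:ℝ) (2*Real.pi), ((‖w‖ : ℝ) : ℂ) * Complex.exp ((t:ℂ)*I) = w := by
  have harg := Complex.norm_mul_exp_arg_mul_I w
  have h1 := Complex.neg_pi_lt_arg w
  have h2 := Complex.arg_le_pi w
  have hπ := Real.pi_pos
  by_cases h : 0 ≤ Complex.arg w
  · exact ⟨Complex.arg w, ⟨h, by linarith⟩, by exact_mod_cast harg⟩
  · refine ⟨Complex.arg w + 2*Real.pi, ⟨by linarith, by linarith⟩, ?_⟩
    have : Complex.exp (((Complex.arg w + 2*Real.pi : ℝ) : ℂ) * I)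
        = Complex.exp ((Complex.arg w : ℂ) * I) := by
      rw [show ((Complex.arg w + 2*Real.pi : ℝ) : ℂ) * I
          = (Complex.arg w : ℂ) * I + 2*(Real.pi:ℂ)*I by push_cast; ring]
      rw [Complex.exp_add, Complex.exp_two_pi_mul_I, mul_one]
    rw [this]
    exact_mod_cast harg

/-- Maximum principle on a closed disc for continuous functions with the local
mean value property. -/
lemma max_principle {c : ℂ} {R : ℝ} (hR : 0 < R) {D : ℂ → ℝ}
    (hc : ContinuousOn D (closedBall c R))
    (hmvp : ∀ z ∈ ball c R, ∃ ρ₀ > 0, ∀ ρ, 0 < ρ → ρ < ρ₀ → mvpEq D z ρ)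
    (hbd : ∀ z ∈ sphere c R, D z ≤ 0) :
    ∀ z ∈ closedBall c R, D z ≤ 0 := by
  by_contra hcon
  push_neg at hcon
  obtain ⟨z1, hz1m, hz1⟩ := hcon
  obtain ⟨z₀, hz₀m, hmax⟩ := (isCompact_closedBall c R).exists_isMaxOn
    ⟨c, mem_closedBall_self hR.le⟩ hc
  rw [isMaxOn_iff] at hmax
  set M := D z₀ with hM
  have hMpos : 0 < M := lt_of_lt_of_le hz1 (hmax z1 hz1m)
  have hz₀ball : z₀ ∈ ball c R := by
    rcases (mem_closedBall.1 hz₀m).lt_or_eq with h | h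
    · exact mem_ball.2 h
    · exfalso
      have : z₀ ∈ sphere c R := mem_sphere.2 h
      linarith [hbd z₀ this]
  set S := {z : ℂ | z ∈ ball c R ∧ D z = M} with hS
  set T := {z : ℂ | z ∈ ball c R ∧ D z < M} with hT
  have hcball : ∀ z ∈ ball c R, ContinuousAt D z := fun z hz =>
    hc.continuousAt (Filter.mem_of_superset (isOpen_ball.mem_nhds hz) ball_subset_closedBall)
  have hTopen : IsOpen T := by
    rw [isOpen_iff_mem_nhds]
    intro z hz
    have h1 : ∀ᶠ ζ in 𝓝 z, ζ ∈ ball c R := isOpen_ball.eventually_mem hz.1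
    have h2 : ∀ᶠ ζ in 𝓝 z, D ζ < M := (hcball z hz.1).eventually (gt_mem_nhds hz.2)
    filter_upwards [h1, h2] with ζ hζ1 hζ2
    exact ⟨hζ1, hζ2⟩
  have hSopen : IsOpen S := by
    rw [Metric.isOpen_iff]
    intro z hz
    obtain ⟨ρ₀, hρ₀, hz2⟩ := hmvp z hz.1
    set r := min ρ₀ (R - dist z c) with hr
    have hrpos : 0 < r := lt_min hρ₀ (by have := mem_ball.1 hz.1; linarith)
    refine ⟨r/2, by linarith, ?_⟩
    intro ζ hζ
    have hζz : dist ζ z < r/2 := mem_ball.1 hζ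
    have hζball : ζ ∈ ball c R := by
      rw [mem_ball]
      calc dist ζ c ≤ dist ζ z + dist z c := dist_triangle _ _ _
        _ < r/2 + dist z c := by linarith
        _ ≤ (R - dist z c)/2 + dist z c := by
            have : r ≤ R - dist z c := min_le_right _ _
            linarith
        _ ≤ R := by
            have : dist z c < R := mem_ball.1 hz.1
            linarith
    by_cases hζeq : ζ = z
    · exact ⟨hζball, by rw [hζeq]; exact hz.2⟩
    refine ⟨hζball, ?_⟩
    set ρ := dist ζ z with hρdef
    have hρpos : 0 < ρ := dist_pos.2 hζeq
    have hρlt : ρ < ρ₀ := lt_of_lt_of_le (by linarith) (min_le_left _ _)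
    have hmv := hz2 ρ hρpos hρlt
    -- circle of radius ρ around z lies in closedBall c R
    have hcirc : ∀ t : ℝ, z + (ρ:ℂ) * Complex.exp ((t:ℂ)*I) ∈ closedBall c R := by
      intro t
      have := circle_mem_closedBall z hρpos.le t
      rw [mem_closedBall] at this ⊢
      calc dist (z + (ρ:ℂ) * Complex.exp ((t:ℂ)*I)) c
          ≤ dist (z + (ρ:ℂ) * Complex.exp ((t:ℂ)*I)) z + dist z c := dist_triangle _ _ _
        _ ≤ ρ + dist z c := by linarith
        _ ≤ R := by
            have h1 : ρ < r/2 := by linarith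
            have h2 : r ≤ R - dist z c := min_le_right _ _
            linarith
    set G : ℝ → ℝ := fun t => M - D (z + (ρ:ℂ) * Complex.exp ((t:ℂ)*I)) with hG
    have hGcont : ContinuousOn G (Icc 0 (2*Real.pi)) := by
      apply ContinuousOn.sub continuousOn_const
      apply (hc.comp (by fun_prop : Continuous fun t : ℝ =>
        z + (ρ:ℂ) * Complex.exp ((t:ℂ)*I)).continuousOn ?_)
      intro t _
      exact hcirc t
    have hGnonneg : ∀ t ∈ Icc (0:ℝ) (2*Real.pi), 0 ≤ G t := by
      intro t _
      simp only [hG, sub_nonneg]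
      exact hmax _ (hcirc t)
    have hGzero : (∫ t in (0:ℝ)..(2*Real.pi), G t) = 0 := by
      have hDint : IntervalIntegrable (fun t => D (z + (ρ:ℂ) * Complex.exp ((t:ℂ)*I)))
          MeasureTheory.volume 0 (2*Real.pi) := by
        apply ContinuousOn.intervalIntegrable
        apply (hc.comp (by fun_prop : Continuous fun t : ℝ =>
          z + (ρ:ℂ) * Complex.exp ((t:ℂ)*I)).continuousOn ?_)
        intro t _
        exact hcirc t
      rw [hG]
      rw [intervalIntegral.integral_sub (intervalIntegrable_const) hDint]
      have h2π : (0:ℝ) < 2*Real.pi := by positivity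
      rw [intervalIntegral.integral_const]
      have : (∫ t in (0:ℝ)..(2*Real.pi), D (z + (ρ:ℂ) * Complex.exp ((t:ℂ)*I)))
          = 2*Real.pi * D z := by
        rw [mvpEq] at hmv
        rw [hmv]
        have : Real.pi ≠ 0 := Real.pi_ne_zero
        rw [← mul_assoc, mul_inv_cancel₀ (by positivity), one_mul]
      rw [this, hz.2]
      simp only [sub_zero, smul_eq_mul]
      ring
    -- D ζ = M
    by_contra hne
    have hlt : D ζ < M := lt_of_le_of_ne (hmax ζ (ball_subset_closedBall hζball)) hne
    obtain ⟨t₁, ht₁m, ht₁⟩ := exists_angle (sub_ne_zero_of_ne hζeq)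
    have hζrep : z + (ρ:ℂ) * Complex.exp ((t₁:ℂ)*I) = ζ := by
      have habs : ‖ζ - z‖ = ρ := by rw [hρdef, Complex.dist_eq]
      rw [← habs]
      rw [ht₁]
      ring
    have hGt₁ : 0 < G t₁ := by
      simp only [hG, sub_pos]
      rw [hζrep]
      exact hlt
    have := integral_pos_aux (by positivity) hGcont hGnonneg ht₁m hGt₁
    rw [hGzero] at this
    exact lt_irrefl 0 this
  -- use preconnectedness
  have hpc : IsPreconnected (ball c R) := (convex_ball c R).isPreconnected
  have hconst : ∀ ζ ∈ ball c R, D ζ = M := by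
    intro ζ hζ
    by_contra hne
    have hζT : ζ ∈ T := ⟨hζ, lt_of_le_of_ne (hmax ζ (ball_subset_closedBall hζ)) hne⟩
    have hcover : ball c R ⊆ S ∪ T := by
      intro x hx
      rcases (hmax x (ball_subset_closedBall hx)).lt_or_eq with h | h
      · exact Or.inr ⟨hx, h⟩
      · exact Or.inl ⟨hx, h⟩
    obtain ⟨p, _, hpS, hpT⟩ := hpc S T hSopen hTopen hcover ⟨z₀, hz₀ball, hz₀ball, rfl⟩
      ⟨ζ, hζ, hζT⟩
    exact absurd hpS.2 (ne_of_lt hpT.2)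
  -- contradiction with boundary
  set p := c + (R:ℂ) with hp
  have hpsphere : p ∈ sphere c R := by
    simp only [hp, mem_sphere, Complex.dist_eq, add_sub_cancel_left]
    rw [Complex.norm_real, Real.norm_eq_abs, _root_.abs_of_nonneg hR.le]
  have hpnb : (𝓝[ball c R] p).NeBot := by
    rw [← mem_closure_iff_nhdsWithin_neBot, closure_ball c hR.ne']
    exact sphere_subset_closedBall hpsphere
  have htend : Tendsto D (𝓝[ball c R] p) (𝓝 (D p)) :=
    ((hc p (sphere_subset_closedBall hpsphere)).mono ball_subset_closedBall)
  have htend2 : Tendsto D (𝓝[ball c R] p) (𝓝 M) := by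
    apply Tendsto.congr' _ tendsto_const_nhds
    filter_upwards [self_mem_nhdsWithin] with x hx
    exact (hconst x hx).symm
  have : D p = M := tendsto_nhds_unique htend htend2
  linarith [hbd p hpsphere]

end SR

namespace SR

lemma mvpEq_sub {u1 u2 : ℂ → ℝ} {z : ℂ} {ρ : ℝ} (h1 : mvpEq u1 z ρ) (h2 : mvpEq u2 z ρ)
    (hi1 : IntervalIntegrable (fun t => u1 (z + (ρ:ℂ) * Complex.exp ((t:ℂ)*I)))
      MeasureTheory.volume 0 (2*Real.pi))
    (hi2 : IntervalIntegrable (fun t => u2 (z + (ρ:ℂ) * Complex.exp ((t:ℂ)*I)))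
      MeasureTheory.volume 0 (2*Real.pi)) :
    mvpEq (fun w => u1 w - u2 w) z ρ := by
  unfold mvpEq at *
  rw [intervalIntegral.integral_sub hi1 hi2, mul_sub, ← h1, ← h2]

/-- The Poisson representation: a continuous function with the local MVP on a disc
agrees with its Poisson integral. -/
lemma poisson_rep {c : ℂ} {R : ℝ} (hR : 0 < R) {u : ℂ → ℝ}
    (hu : ContinuousOn u (closedBall c R))
    (hmvp : ∀ z ∈ ball c R, ∃ ρ₀ > 0, ∀ ρ, 0 < ρ → ρ < ρ₀ → mvpEq u z ρ) :
    ∀ z ∈ ball c R, u z = pP u c R z := by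
  classical
  set H : ℂ → ℝ := fun z => if z ∈ ball c R then pP u c R z else u z with hH
  have hHball : ∀ z ∈ ball c R, H z = pP u c R z := fun z hz => if_pos hz
  have hHsphere : ∀ z ∈ sphere c R, H z = u z := by
    intro z hz
    apply if_neg
    rw [mem_ball]
    rw [mem_sphere] at hz
    rw [hz]
    exact lt_irrefl R
  have hHcont : ContinuousOn H (closedBall c R) := by
    intro z hz
    rw [← ball_union_sphere] at hz
    rcases hz with hz | hz
    · apply ContinuousAt.continuousWithinAt
      apply ((continuousOn_pP hR hu).continuousAt (isOpen_ball.mem_nhds hz)).congr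
      filter_upwards [isOpen_ball.eventually_mem hz] with ζ hζ
      exact (hHball ζ hζ).symm
    · have hHz : H z = u z := hHsphere z hz
      rw [ContinuousWithinAt, hHz, ← ball_union_sphere, nhdsWithin_union]
      rw [tendsto_sup]
      constructor
      · apply Tendsto.congr' _ (tendsto_pP hR hu hz)
        filter_upwards [self_mem_nhdsWithin] with x hx
        exact (hHball x hx).symm
      · apply Tendsto.congr' _ (((hu z (sphere_subset_closedBall hz)).mono
          sphere_subset_closedBall))
        filter_upwards [self_mem_nhdsWithin] with x hx
        exact (hHsphere x hx).symm
  have hHmvp : ∀ z ∈ ball c R, ∃ ρ₀ > 0, ∀ ρ, 0 < ρ → ρ < ρ₀ → mvpEq H z ρ := by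
    intro z hz
    refine ⟨R - dist z c, by have := mem_ball.1 hz; linarith, ?_⟩
    intro ρ hρpos hρlt
    have hsub : closedBall z ρ ⊆ ball c R := by
      intro x hx
      rw [mem_ball]
      calc dist x c ≤ dist x z + dist z c := dist_triangle _ _ _
        _ ≤ ρ + dist z c := by linarith [mem_closedBall.1 hx]
        _ < R := by linarith
    have h := mvp_pP hR hu hρpos hsub
    rw [mvpEq, hHball z hz, h]
    congr 1
    apply intervalIntegral.integral_congr
    intro t _
    exact (hHball _ (hsub (circle_mem_closedBall z hρpos.le t))).symm
  -- integrability helpers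
  have hcircint : ∀ (f : ℂ → ℝ), ContinuousOn f (closedBall c R) → ∀ z ∈ ball c R, ∀ ρ,
      0 < ρ → closedBall z ρ ⊆ ball c R →
      IntervalIntegrable (fun t => f (z + (ρ:ℂ) * Complex.exp ((t:ℂ)*I)))
        MeasureTheory.volume 0 (2*Real.pi) := by
    intro f hf z hz ρ hρ hsub
    apply Continuous.intervalIntegrable
    apply hf.comp_continuous (by fun_prop)
    intro t
    exact ball_subset_closedBall (hsub (circle_mem_closedBall z hρ.le t))
  have hDmvp : ∀ z ∈ ball c R, ∃ ρ₀ > 0, ∀ ρ, 0 < ρ → ρ < ρ₀ →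
      mvpEq (fun w => u w - H w) z ρ := by
    intro z hz
    obtain ⟨ρ₀, hρ₀, hu2⟩ := hmvp z hz
    obtain ⟨ρ₁, hρ₁, hH2⟩ := hHmvp z hz
    have hzc := mem_ball.1 hz
    refine ⟨min (min ρ₀ ρ₁) (R - dist z c), by
      apply lt_min (lt_min hρ₀ hρ₁); linarith, ?_⟩
    intro ρ hρpos hρlt
    have hsub : closedBall z ρ ⊆ ball c R := by
      intro x hx
      rw [mem_ball]
      have hle := min_le_right (min ρ₀ ρ₁) (R - dist z c)
      calc dist x c ≤ dist x z + dist z c := dist_triangle _ _ _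
        _ ≤ ρ + dist z c := by linarith [mem_closedBall.1 hx]
        _ < R := by linarith
    have h1 := hu2 ρ hρpos (lt_of_lt_of_le hρlt ((min_le_left _ _).trans (min_le_left _ _)))
    have h2 := hH2 ρ hρpos (lt_of_lt_of_le hρlt ((min_le_left _ _).trans (min_le_right _ _)))
    exact mvpEq_sub h1 h2 (hcircint u hu z hz ρ hρpos hsub) (hcircint H hHcont z hz ρ hρpos hsub)
  have hDbd : ∀ z ∈ sphere c R, u z - H z ≤ 0 := by
    intro z hz
    rw [hHsphere z hz]
    simp
  have hDbd' : ∀ z ∈ sphere c R, H z - u z ≤ 0 := by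
    intro z hz
    rw [hHsphere z hz]
    simp
  have hmax1 := max_principle hR (hu.sub hHcont) hDmvp hDbd
  have hDmvp' : ∀ z ∈ ball c R, ∃ ρ₀ > 0, ∀ ρ, 0 < ρ → ρ < ρ₀ →
      mvpEq (fun w => H w - u w) z ρ := by
    intro z hz
    obtain ⟨ρ₀, hρ₀, h⟩ := hDmvp z hz
    refine ⟨ρ₀, hρ₀, ?_⟩
    intro ρ h1 h2
    have := h ρ h1 h2
    unfold mvpEq at this ⊢
    have heq : ∀ w, H w - u w = -(u w - H w) := fun w => by ring
    rw [show (fun w => H w - u w) = fun w => -(u w - H w) from funext heq] at *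
    rw [intervalIntegral.integral_neg]
    simp only [neg_eq_iff_eq_neg] at this ⊢
    rw [this]
    ring
  have hmax2 := max_principle hR (hHcont.sub hu) hDmvp' hDbd'
  intro z hz
  have h1 : u z - H z ≤ 0 := hmax1 z (ball_subset_closedBall hz)
  have h2 : H z - u z ≤ 0 := hmax2 z (ball_subset_closedBall hz)
  have : u z = H z := le_antisymm (by linarith) (by linarith)
  rw [this, hHball z hz]

/-- A continuous function with the local MVP on a disc satisfies the exact mean value
equation over the boundary circle. -/
lemma center_mvp {c : ℂ} {R : ℝ} (hR : 0 < R) {u : ℂ → ℝ}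
    (hu : ContinuousOn u (closedBall c R))
    (hmvp : ∀ z ∈ ball c R, ∃ ρ₀ > 0, ∀ ρ, 0 < ρ → ρ < ρ₀ → mvpEq u z ρ) :
    mvpEq u c R := by
  have h1 := poisson_rep hR hu hmvp c (mem_ball_self hR)
  rw [mvpEq, h1, pP_center hR hu]
  rfl

end SR

namespace SR

lemma hasDerivAt_re {f : ℝ → ℂ} {d : ℂ} {x : ℝ} (h : HasDerivAt f d x) :
    HasDerivAt (fun y => (f y).re) d.re x := by
  have h2 := Complex.reCLM.hasFDerivAt.comp_hasDerivAt x h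
  exact h2

lemma kerD_center (hR : 0 < R) {c : ℂ} (t : ℝ) :
    kerD c R c t = ((2/R : ℝ) : ℂ) * Complex.exp ((-t:ℂ) * I) := by
  rw [kerD, sub_self, sub_zero, ksi]
  have hexp := Complex.exp_ne_zero ((t:ℂ) * I)
  have hRne : (R:ℂ) ≠ 0 := by exact_mod_cast hR.ne'
  rw [show ((-t:ℂ) * I) = -((t:ℂ) * I) by ring, Complex.exp_neg]
  field_simp
  push_cast
  field_simp

lemma deriv_at_center {c : ℂ} {R : ℝ} (hR : 0 < R) {u : ℂ → ℝ}
    (hu : ContinuousOn u (closedBall c R))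
    (hmvp : ∀ z ∈ ball c R, ∃ ρ₀ > 0, ∀ ρ, 0 < ρ → ρ < ρ₀ → mvpEq u z ρ) :
    HasDerivAt (fun y : ℝ => u (c + (y:ℂ) * I))
      ((2*Real.pi)⁻¹ * (2/R) * ∫ t in (0:ℝ)..(2*Real.pi), bf u c R t * Real.sin t) 0 := by
  have hg := hasDerivAt_pg hR hu (mem_ball_self hR)
  set W := ∫ t in (0:ℝ)..(2*Real.pi), (bf u c R t : ℂ) * kerD c R c t with hW
  -- the vertical line
  have hline : HasDerivAt (fun y : ℝ => c + (y:ℂ) * I) I 0 := by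
    have h1 : HasDerivAt (fun y : ℝ => (y:ℂ)) 1 0 := by
      simpa using (hasDerivAt_id (0:ℝ)).ofReal_comp
    simpa using (h1.mul_const I).const_add c
  have hgc : HasDerivAt (pg u c R) ((2*Real.pi : ℂ)⁻¹ * W) ((fun y : ℝ => c + (y:ℂ) * I) 0) := by
    simpa using hg
  have hcomp : HasDerivAt (fun y : ℝ => pg u c R (c + (y:ℂ) * I))
      (I • ((2*Real.pi : ℂ)⁻¹ * W)) 0 := by have := hgc.scomp 0 hline; exact this
  have hre := hasDerivAt_re hcomp
  -- identify the function near 0 with u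
  have hball : ∀ᶠ y in 𝓝 (0:ℝ), (fun y : ℝ => u (c + (y:ℂ) * I)) y
      = (fun y : ℝ => (pg u c R (c + (y:ℂ) * I)).re) y := by
    have hmem : ∀ᶠ y in 𝓝 (0:ℝ), y ∈ ball (0:ℝ) R := isOpen_ball.eventually_mem
      (mem_ball_self hR)
    filter_upwards [hmem] with y hy
    have hzball : c + (y:ℂ) * I ∈ ball c R := by
      rw [mem_ball, Complex.dist_eq]
      simp only [add_sub_cancel_left]
      rw [norm_mul, Complex.norm_real, Complex.norm_I, mul_one]
      simpa [Real.dist_eq] using mem_ball.1 hy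
    exact poisson_rep hR hu hmvp _ hzball
  have hfinal := hre.congr_of_eventuallyEq hball
  refine hfinal.congr_deriv ?_
  -- compute the derivative value
  have hintc : IntervalIntegrable (fun t => (bf u c R t : ℂ) * kerD c R c t)
      MeasureTheory.volume 0 (2*Real.pi) :=
    ((Complex.continuous_ofReal.comp (continuous_bf hR hu)).mul
      (continuous_kerD_t hR (mem_ball_self hR))).intervalIntegrable _ _
  have hWim : W.im = -(2/R) * ∫ t in (0:ℝ)..(2*Real.pi), bf u c R t * Real.sin t := by
    rw [hW, im_intervalIntegral hintc]
    rw [← intervalIntegral.integral_const_mul]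
    apply intervalIntegral.integral_congr
    intro t _
    show (((bf u c R t : ℝ) : ℂ) * kerD c R c t).im = -(2/R) * (bf u c R t * Real.sin t)
    rw [kerD_center hR]
    rw [show ((-t:ℂ) * I) = ((-t : ℝ) : ℂ) * I by push_cast; ring]
    simp only [Complex.mul_im, Complex.mul_re, Complex.ofReal_re, Complex.ofReal_im,
      Complex.exp_ofReal_mul_I_im, Complex.exp_ofReal_mul_I_re, Real.sin_neg, Real.cos_neg]
    ring
  have hval : (I • ((2*Real.pi : ℂ)⁻¹ * W)).re
      = (2*Real.pi)⁻¹ * (2/R) * ∫ t in (0:ℝ)..(2*Real.pi), bf u c R t * Real.sin t := by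
    rw [smul_eq_mul, show (I * ((2*Real.pi : ℂ)⁻¹ * W)) = (2*Real.pi : ℂ)⁻¹ * (I * W) by ring]
    rw [show (2*Real.pi : ℂ)⁻¹ = (((2*Real.pi)⁻¹ : ℝ) : ℂ) by push_cast; ring,
      Complex.re_ofReal_mul]
    have : (I * W).re = -W.im := by simp [Complex.mul_re]
    rw [this, hWim]
    ring
  rw [hval]

end SR

open SR in
/-- If `v > 0` is harmonic on `ℍ` and extends continuously by `0` to the interval
`(a,b) ⊆ ℝ`, then the odd reflection `v*` is harmonic across `(a,b)` and its
normal derivative on `(a,b)` exists and is strictly positive. -/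
theorem stmt_9 (v : ℂ → ℝ) (a b : ℝ) (hab : a < b)
    (hv : HarmonicOnSet v UHP)
    (hpos : ∀ z ∈ UHP, 0 < v z)
    (hbdry : ∀ x ∈ Set.Ioo a b, Tendsto v (nhdsWithin (x : ℂ) UHP) (nhds 0)) :
    HarmonicOnSet (oddReflection v)
      (UHP ∪ {z : ℂ | z.im = 0 ∧ z.re ∈ Set.Ioo a b} ∪ LHP) ∧
    ∀ x ∈ Set.Ioo a b, ∃ d : ℝ, 0 < d ∧
      HasDerivAt (fun y : ℝ => oddReflection v ((x : ℂ) + (y : ℂ) * Complex.I)) d 0 := by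
  set w := oddReflection v with hwdef
  set S := {z : ℂ | z.im = 0 ∧ z.re ∈ Set.Ioo a b} with hSdef
  -- local MVP at every point of the domain
  have hmvpAt : ∀ ζ ∈ UHP ∪ S ∪ LHP, ∃ ρ₀ > 0, ∀ ρ', 0 < ρ' → ρ' < ρ₀ → mvpEq w ζ ρ' := by
    intro ζ hζ
    rcases hζ with (h | h) | h
    · exact ⟨ζ.im, h, fun ρ' h1 h2 => mvp_upper hv h h1 h2⟩
    · exact ⟨1, one_pos, fun ρ' _ _ => mvp_real_axis v h.1 ρ'⟩
    · exact ⟨-ζ.im, by simpa [LHP] using h, fun ρ' h1 h2 => mvp_lower hv h h1 h2⟩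
  -- continuity
  have hcont : ContinuousOn w (UHP ∪ S ∪ LHP) := by
    intro z hz
    apply ContinuousAt.continuousWithinAt
    rcases hz with (h | h) | h
    · exact contAt_upper hv h
    · exact contAt_axis hbdry h.1 h.2
    · exact contAt_lower hv h
  -- sign facts
  have hwge : ∀ ζ : ℂ, 0 ≤ ζ.im → 0 ≤ w ζ := by
    intro ζ hζ
    rcases hζ.lt_or_eq with h | h
    · rw [hwdef, oddReflection, if_pos h]
      exact (hpos ζ h).le
    · rw [hwdef, oddReflection, if_neg (by rw [← h]; exact lt_irrefl _),
        if_neg (by rw [← h]; exact lt_irrefl _)]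
  have hwle : ∀ ζ : ℂ, ζ.im ≤ 0 → w ζ ≤ 0 := by
    intro ζ hζ
    rcases hζ.lt_or_eq with h | h
    · rw [hwdef, oddReflection, if_neg (by linarith), if_pos h]
      have : conj' ζ ∈ UHP := by
        simp only [UHP, mem_setOf_eq, Complex.conj_im]
        linarith
      linarith [hpos _ this]
    · rw [hwdef, oddReflection, if_neg (by rw [h]; exact lt_irrefl _),
        if_neg (by rw [h]; exact lt_irrefl _)]
  constructor
  · refine ⟨hcont, ?_⟩
    intro z hz ρ hρ hsub
    have hu : ContinuousOn w (closedBall z ρ) := hcont.mono hsub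
    have hmvp : ∀ ζ ∈ ball z ρ, ∃ ρ₀ > 0, ∀ ρ', 0 < ρ' → ρ' < ρ₀ → mvpEq w ζ ρ' :=
      fun ζ hζ => hmvpAt ζ (hsub (ball_subset_closedBall hζ))
    exact center_mvp hρ hu hmvp
  · intro x hx
    set R := min (x - a) (b - x) / 2 with hRdef
    have hxa := hx.1
    have hxb := hx.2
    have hR : 0 < R := by
      rw [hRdef]
      have : 0 < min (x - a) (b - x) := lt_min (by linarith) (by linarith)
      linarith
    have hRa : R ≤ (x - a)/2 := by
      rw [hRdef]
      have := min_le_left (x - a) (b - x)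
      linarith
    have hRb : R ≤ (b - x)/2 := by
      rw [hRdef]
      have := min_le_right (x - a) (b - x)
      linarith
    have hsub : closedBall (x:ℂ) R ⊆ UHP ∪ S ∪ LHP := by
      intro ζ hζ
      rcases lt_trichotomy ζ.im 0 with h | h | h
      · exact Or.inr h
      · left; right
        refine ⟨h, ?_⟩
        have hre : |ζ.re - x| ≤ R := by
          have h1 : |(ζ - (x:ℂ)).re| ≤ ‖ζ - (x:ℂ)‖ := Complex.abs_re_le_norm _
          have h2 : ‖ζ - (x:ℂ)‖ ≤ R := by
            rw [← Complex.dist_eq]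
            exact mem_closedBall.1 hζ
          simp only [Complex.sub_re, Complex.ofReal_re] at h1
          linarith
        rw [abs_sub_le_iff] at hre
        constructor <;> [skip; skip] <;> [linarith [hre.2]; linarith [hre.1]]
      · exact Or.inl (Or.inl h)
    have hu : ContinuousOn w (closedBall (x:ℂ) R) := hcont.mono hsub
    have hmvp : ∀ ζ ∈ ball (x:ℂ) R, ∃ ρ₀ > 0, ∀ ρ', 0 < ρ' → ρ' < ρ₀ → mvpEq w ζ ρ' :=
      fun ζ hζ => hmvpAt ζ (hsub (ball_subset_closedBall hζ))
    have hder := deriv_at_center hR hu hmvp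
    refine ⟨_, ?_, hder⟩
    -- positivity of the derivative
    have him : ∀ t : ℝ, ((x:ℂ) + ksi R t).im = R * Real.sin t := by
      intro t
      simp [ksi, Complex.add_im, Complex.mul_im, Complex.exp_ofReal_mul_I_im,
        Complex.exp_ofReal_mul_I_re]
    have hπ := Real.pi_pos
    have hbfcont : Continuous fun t => bf w (x:ℂ) R t * Real.sin t :=
      (continuous_bf hR hu).mul Real.continuous_sin
    have h1 : 0 < ∫ t in (0:ℝ)..Real.pi, bf w (x:ℂ) R t * Real.sin t := by
      apply integral_pos_aux (t₁ := Real.pi/2) hπ hbfcont.continuousOn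
      · intro t ht
        apply mul_nonneg
        · apply hwge
          rw [him t]
          exact mul_nonneg hR.le (Real.sin_nonneg_of_nonneg_of_le_pi ht.1 ht.2)
        · exact Real.sin_nonneg_of_nonneg_of_le_pi ht.1 ht.2
      · exact ⟨by linarith, by linarith⟩
      · show 0 < bf w (x:ℂ) R (Real.pi/2) * Real.sin (Real.pi/2)
        have himpos : (0:ℝ) < ((x:ℂ) + ksi R (Real.pi/2)).im := by
          rw [him, Real.sin_pi_div_two, mul_one]
          exact hR
        have hbf : 0 < bf w (x:ℂ) R (Real.pi/2) := by
          show 0 < w ((x:ℂ) + ksi R (Real.pi/2))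
          rw [hwdef, oddReflection, if_pos himpos]
          exact hpos _ himpos
        rw [Real.sin_pi_div_two, mul_one]
        exact hbf
    have h2 : 0 ≤ ∫ t in Real.pi..(2*Real.pi), bf w (x:ℂ) R t * Real.sin t := by
      apply intervalIntegral.integral_nonneg (by linarith)
      intro t ht
      have hsin : Real.sin t ≤ 0 := by
        have h3 : Real.sin (t - Real.pi) = -Real.sin t := by
          rw [Real.sin_sub]
          simp
        have h4 : 0 ≤ Real.sin (t - Real.pi) :=
          Real.sin_nonneg_of_nonneg_of_le_pi (by linarith [ht.1]) (by linarith [ht.2])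
        linarith
      have hbf : bf w (x:ℂ) R t ≤ 0 := by
        apply hwle
        rw [him t]
        exact mul_nonpos_of_nonneg_of_nonpos hR.le hsin
      nlinarith
    have hsplit : (∫ t in (0:ℝ)..(2*Real.pi), bf w (x:ℂ) R t * Real.sin t)
        = (∫ t in (0:ℝ)..Real.pi, bf w (x:ℂ) R t * Real.sin t)
          + ∫ t in Real.pi..(2*Real.pi), bf w (x:ℂ) R t * Real.sin t :=
      (intervalIntegral.integral_add_adjacent_intervals (hbfcont.intervalIntegrable _ _)
        (hbfcont.intervalIntegrable _ _)).symm
    have hIpos : 0 < ∫ t in (0:ℝ)..(2*Real.pi), bf w (x:ℂ) R t * Real.sin t := by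
      rw [hsplit]
      linarith
    have hcpos : 0 < (2*Real.pi)⁻¹ * (2/R) := by positivity
    exact mul_pos hcpos hIpos
end

section
/- Let T be holomorphic on a neighborhood of the closed disk {|z| ≤ η}, with T(0) = 0, T'(0) = 0, T''(0) ≠ 0 (a zero of order exactly 2 at 0), and T injective on the closed upper half-disk K_η = {|z| ≤ η, Im z ≥ 0}. Define Ω = T({|z| < η, Im z > 0}) and Γ = T((-η, η)). Then the function S = A ∘ T⁻¹, where A(z) = conj(T(conj(z))), is well defined on Ω ∪ Γ, holomorphic on Ω, continuous on Ω ∪ Γ, and satisfies S(ζ) = conj(ζ) for all ζ ∈ Γ; that is, S is a Schwarz function on the cusp domain Ω ∪ Γ. -/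
open Complex Metric Set

local notation "conj'" => starRingEnd ℂ

open Filter Function Topology

lemma hasDerivAt_conj_comp {f : ℂ → ℂ} {z c : ℂ} (hf : HasDerivAt f c (conj' z)) :
    HasDerivAt (fun w => conj' (f (conj' w))) (conj' c) z := by
  rw [hasDerivAt_iff_tendsto_slope] at hf ⊢
  have hconj : Tendsto conj' (𝓝[≠] z) (𝓝[≠] (conj' z)) := by
    apply ContinuousWithinAt.tendsto_nhdsWithin
    · exact (Complex.continuous_conj.continuousAt).continuousWithinAt
    · intro w hw hc
      exact hw ((starRingEnd ℂ).injective hc)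
  have h2 : Tendsto (fun y => conj' (slope f (conj' z) (conj' y))) (𝓝[≠] z) (𝓝 (conj' c)) :=
    (Complex.continuous_conj.continuousAt.tendsto.comp (hf.comp hconj))
  refine h2.congr fun y => ?_
  simp only [slope_def_field, map_div₀, map_sub, Complex.conj_conj]


lemma deriv_ne_zero_of_injOn {f : ℂ → ℂ} {z₀ : ℂ} {V : Set ℂ}
    (hf : AnalyticAt ℂ f z₀) (hV : V ∈ 𝓝 z₀) (hinj : Set.InjOn f V) :
    deriv f z₀ ≠ 0 := by
  intro hd0
  set g : ℂ → ℂ := fun z => f z - f z₀ with hgdef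
  have hg : AnalyticAt ℂ g z₀ := hf.sub analyticAt_const
  -- g is not eventually zero
  have hne : ¬ ∀ᶠ z in 𝓝 z₀, g z = 0 := by
    intro hzero
    obtain ⟨ε, hε, hball⟩ := Metric.eventually_nhds_iff.mp (hzero.and hV)
    have h1 : dist (z₀ + ε / 2) z₀ < ε := by
      simp only [Complex.dist_eq, add_sub_cancel_left]
      rw [show ((ε : ℂ) / 2) = ((ε / 2 : ℝ) : ℂ) by push_cast; ring]
      rw [Complex.norm_real, Real.norm_eq_abs, abs_of_pos (by linarith)]
      linarith
    have h0 : dist z₀ z₀ < ε := by simpa using hε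
    obtain ⟨hg1, hV1⟩ := hball h1
    obtain ⟨_, hV0⟩ := hball h0
    have hf1 : f (z₀ + ε / 2) = f z₀ := by
      have := sub_eq_zero.mp hg1
      simpa using this
    have heq := hinj hV1 hV0 hf1
    have : ((ε / 2 : ℝ) : ℂ) = 0 := by
      have h2 : (ε : ℂ) / 2 = 0 := by
        have := sub_eq_zero.mpr heq
        simpa using this
      push_cast
      simpa using h2
    norm_cast at this
    linarith
  -- finite order
  have hord : analyticOrderAt g z₀ ≠ ⊤ := fun htop => hne (analyticOrderAt_eq_top.mp htop)
  obtain ⟨n, hn⟩ := WithTop.ne_top_iff_exists.mp hord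
  obtain ⟨h, hh, hh0, hev⟩ := (hg.analyticOrderAt_eq_natCast (n := n)).mp hn.symm
  simp only [smul_eq_mul] at hev
  -- n ≥ 2
  have hgz0 : g z₀ = 0 := by simp [hgdef]
  have hn0 : n ≠ 0 := by
    rintro rfl
    apply hh0
    have := hev.self_of_nhds
    simpa [hgz0] using this.symm
  have hdg : deriv g z₀ = 0 := by
    have : deriv g z₀ = deriv f z₀ := deriv_sub_const (f z₀)
    rw [this, hd0]
  have hn1 : n ≠ 1 := by
    rintro rfl
    apply hh0
    have hD : HasDerivAt (fun z => (z - z₀) ^ 1 * h z) (h z₀) z₀ := by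
      have := (((hasDerivAt_id z₀).sub_const z₀).fun_pow 1).fun_mul hh.differentiableAt.hasDerivAt
      simpa using this
    have hEq : g =ᶠ[𝓝 z₀] fun z => (z - z₀) ^ 1 * h z := hev
    have := hEq.deriv_eq
    rw [hdg] at this
    rw [← hD.deriv, ← this]
  have hn2 : 2 ≤ n := by omega
  -- construct n-th root of h
  have hc : h z₀ ≠ 0 := hh0
  set c := h z₀ with hcdef
  set d := Complex.exp (Complex.log c / n) with hddef
  have hnC : (n : ℂ) ≠ 0 := Nat.cast_ne_zero.mpr hn0
  have hdn : d ^ n = c := by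
    rw [hddef, ← Complex.exp_nat_mul, mul_div_cancel₀ _ hnC, Complex.exp_log hc]
  have hdne : d ≠ 0 := Complex.exp_ne_zero _
  set r : ℂ → ℂ := fun z => d * Complex.exp (Complex.log (h z / c) / n) with hrdef
  have hone : h z₀ / c ∈ Complex.slitPlane := by
    rw [div_self hc]; exact Complex.one_mem_slitPlane
  have hr_an : AnalyticAt ℂ r z₀ :=
    analyticAt_const.mul (((hh.div analyticAt_const hc).clog hone).div analyticAt_const hnC).cexp
  have hr0 : r z₀ = d := by
    have hhc : h z₀ / c = 1 := div_self hc
    simp [hrdef, hhc, Complex.log_one]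
  have hrne : r z₀ ≠ 0 := by rw [hr0]; exact hdne
  have hrpow : ∀ᶠ z in 𝓝 z₀, r z ^ n = h z := by
    filter_upwards [hh.continuousAt.eventually_ne hc] with z hz
    rw [hrdef]
    have hzc : h z / c ≠ 0 := div_ne_zero hz hc
    rw [mul_pow, hdn, ← Complex.exp_nat_mul, mul_div_cancel₀ _ hnC, Complex.exp_log hzc]
    field_simp
  -- φ with φ^n = f - f z₀
  set φ : ℂ → ℂ := fun z => (z - z₀) * r z with hφdef
  have hφ_an : AnalyticAt ℂ φ z₀ := ((analyticAt_id.sub analyticAt_const)).mul hr_an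
  have hφev : ∀ᶠ z in 𝓝 z₀, φ z ^ n = f z - f z₀ := by
    filter_upwards [hev, hrpow] with z h1 h2
    rw [hφdef]
    simp only [mul_pow, h2]
    exact h1.symm
  have hφd : HasDerivAt φ (r z₀) z₀ := by
    have := ((hasDerivAt_id z₀).sub_const z₀).fun_mul hr_an.differentiableAt.hasDerivAt
    simpa using this
  have hφs : HasStrictDerivAt φ (r z₀) z₀ := by
    have h1 : HasStrictDerivAt φ (deriv φ z₀) z₀ :=
      (hφ_an.contDiffAt (n := 1)).hasStrictDerivAt one_ne_zero
    rwa [hφd.deriv] at h1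
  have hφ0 : φ z₀ = 0 := by simp [hφdef]
  -- local inverse
  set F := hφs.hasStrictFDerivAt_equiv hrne with hFdef
  set ψ := F.localInverse φ _ z₀ with hψdef
  have hψcont : Filter.Tendsto ψ (𝓝 (φ z₀)) (𝓝 z₀) := F.localInverse_tendsto
  have hright : ∀ᶠ y in 𝓝 (φ z₀), φ (ψ y) = y := F.eventually_right_inverse
  have hWev : ∀ᶠ z in 𝓝 z₀, φ z ^ n = f z - f z₀ ∧ z ∈ V := hφev.and hV
  have hAll : ∀ᶠ y in 𝓝 (φ z₀), φ (ψ y) = y ∧ (φ (ψ y) ^ n = f (ψ y) - f z₀ ∧ ψ y ∈ V) :=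
    hright.and (hψcont.eventually hWev)
  rw [hφ0] at hAll
  obtain ⟨ε, hε, hP⟩ := Metric.eventually_nhds_iff.mp hAll
  -- root of unity
  set ω := Complex.exp (((2 * Real.pi / n : ℝ) : ℂ) * Complex.I) with hωdef
  have hωn : ω ^ n = 1 := by
    rw [hωdef, ← Complex.exp_nat_mul, ← mul_assoc]
    have : (n : ℂ) * ((2 * Real.pi / n : ℝ) : ℂ) = ((2 * Real.pi : ℝ) : ℂ) := by
      push_cast
      field_simp
    rw [this]
    push_cast
    exact Complex.exp_two_pi_mul_I
  have hω1 : ω ≠ 1 := by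
    rw [hωdef]
    intro hone'
    obtain ⟨k, hk⟩ := Complex.exp_eq_one_iff.mp hone'
    have him : (2 * Real.pi / n : ℝ) = k * (2 * Real.pi) := by
      have := congrArg Complex.im hk
      simpa [Complex.mul_im] using this
    have hpi := Real.pi_pos
    have hnR : (0:ℝ) < n := by positivity
    rcases Int.lt_or_le k 1 with hk1 | hk1
    · have hk0 : (k:ℝ) ≤ 0 := by exact_mod_cast (by omega : k ≤ 0)
      have h1 : (k:ℝ) * (2 * Real.pi) ≤ 0 := mul_nonpos_of_nonpos_of_nonneg hk0 (by positivity)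
      have h2 : (0:ℝ) < 2 * Real.pi / n := by positivity
      linarith
    · have hk0 : (1:ℝ) ≤ (k:ℝ) := by exact_mod_cast hk1
      have h1 : 2 * Real.pi ≤ (k:ℝ) * (2 * Real.pi) := by nlinarith
      have h2 : 2 * Real.pi / n < 2 * Real.pi := by
        apply div_lt_self (by positivity)
        exact_mod_cast (by omega : 1 < n)
      linarith
  have hωabs : ‖ω‖ = 1 := Complex.norm_exp_ofReal_mul_I _
  -- two distinct points with equal f values
  set y₁ : ℂ := ((ε / 2 : ℝ) : ℂ) with hy₁def
  have hy₁ne : y₁ ≠ 0 := by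
    simp only [hy₁def, Complex.ofReal_ne_zero, ne_eq]
    positivity
  have hy₁ : dist y₁ 0 < ε := by
    simp only [Complex.dist_eq, sub_zero, hy₁def, Complex.norm_real, Real.norm_eq_abs]
    rw [abs_of_pos (by positivity)]
    linarith
  have hy₂ : dist (ω * y₁) 0 < ε := by
    simp only [Complex.dist_eq, sub_zero, norm_mul, hωabs, one_mul]
    simpa [Complex.dist_eq, sub_zero] using hy₁
  obtain ⟨he1, hpow1, hmem1⟩ := hP hy₁
  obtain ⟨he2, hpow2, hmem2⟩ := hP hy₂
  have hfeq : f (ψ y₁) = f (ψ (ω * y₁)) := by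
    have h3 : f (ψ y₁) - f z₀ = f (ψ (ω * y₁)) - f z₀ := by
      rw [← hpow1, ← hpow2, he1, he2, mul_pow, hωn, one_mul]
    exact sub_left_inj.mp h3
  have hψeq : ψ y₁ = ψ (ω * y₁) := hinj hmem1 hmem2 hfeq
  have hy : y₁ = ω * y₁ := by
    calc y₁ = φ (ψ y₁) := he1.symm
    _ = φ (ψ (ω * y₁)) := by rw [hψeq]
    _ = ω * y₁ := he2
  apply hω1
  have h4 : ω * y₁ = 1 * y₁ := by rw [one_mul, ← hy]
  exact mul_right_cancel₀ hy₁ne h4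


/-- Schwarz function on a cusp domain: if `T` is holomorphic near the closed disk
of radius `η`, has a zero of order exactly `2` at `0`, and is injective on the
closed upper half-disk, then `S = A ∘ T⁻¹` with `A(z) = conj(T(conj z))` is a
Schwarz function of `Ω = T({|z| < η, Im z > 0})` with boundary `Γ = T((-η,η))`. -/
theorem stmt_17 (η : ℝ) (hη : 0 < η) (T : ℂ → ℂ) (U : Set ℂ) (hUopen : IsOpen U)
    (hUsub : Metric.closedBall (0 : ℂ) η ⊆ U)
    (hThol : DifferentiableOn ℂ T U)
    (hT0 : T 0 = 0) (hT1 : deriv T 0 = 0) (hT2 : iteratedDeriv 2 T 0 ≠ 0)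
    (hTinj : Set.InjOn T {z : ℂ | ‖z‖ ≤ η ∧ 0 ≤ z.im}) :
    DifferentiableOn ℂ
      (fun ζ => conj' (T (conj' (Function.invFunOn T {z : ℂ | ‖z‖ ≤ η ∧ 0 ≤ z.im} ζ))))
      (T '' {z : ℂ | ‖z‖ < η ∧ 0 < z.im}) ∧
    ContinuousOn
      (fun ζ => conj' (T (conj' (Function.invFunOn T {z : ℂ | ‖z‖ ≤ η ∧ 0 ≤ z.im} ζ))))
      (T '' {z : ℂ | ‖z‖ < η ∧ 0 < z.im} ∪ (fun x : ℝ => T (x : ℂ)) '' Set.Ioo (-η) η) ∧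
    ∀ ζ ∈ (fun x : ℝ => T (x : ℂ)) '' Set.Ioo (-η) η,
      conj' (T (conj' (Function.invFunOn T {z : ℂ | ‖z‖ ≤ η ∧ 0 ≤ z.im} ζ))) = conj' ζ := by
  set K : Set ℂ := {z : ℂ | ‖z‖ ≤ η ∧ 0 ≤ z.im} with hKdef
  set D : Set ℂ := {z : ℂ | ‖z‖ < η ∧ 0 < z.im} with hDdef
  set g : ℂ → ℂ := Function.invFunOn T K with hgdef
  have hDK : D ⊆ K := fun z hz => ⟨hz.1.le, hz.2.le⟩
  have hKU : K ⊆ U := fun z hz => hUsub (by simpa [mem_closedBall_zero_iff] using hz.1)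
  have hKc : IsCompact K := by
    have hKeq : K = Metric.closedBall (0:ℂ) η ∩ {z : ℂ | 0 ≤ z.im} := by
      ext z; simp [mem_closedBall_zero_iff, hKdef]
    rw [hKeq]
    exact (isCompact_closedBall _ _).inter_right
      (isClosed_le continuous_const Complex.continuous_im)
  have hTcont : ContinuousOn T K := hThol.continuousOn.mono hKU
  have hgT : ∀ z ∈ K, g (T z) = z := fun z hz => hTinj.leftInvOn_invFunOn hz
  have hgK : ∀ ζ ∈ T '' K, g ζ ∈ K ∧ T (g ζ) = ζ := by
    rintro ζ ⟨z, hz, rfl⟩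
    refine ⟨?_, ?_⟩
    · rw [hgT z hz]; exact hz
    · rw [hgT z hz]
  -- Part 3
  have part3 : ∀ ζ ∈ (fun x : ℝ => T (x : ℂ)) '' Set.Ioo (-η) η,
      conj' (T (conj' (g ζ))) = conj' ζ := by
    rintro ζ ⟨x, hx, rfl⟩
    have hxK : (x : ℂ) ∈ K := by
      constructor
      · rw [Complex.norm_real]
        rw [Real.norm_eq_abs, abs_le]
        exact ⟨hx.1.le, hx.2.le⟩
      · simp
    rw [hgT _ hxK, Complex.conj_ofReal]
  -- continuity of g on T '' K via compactness
  have hgcont : ContinuousOn g (T '' K) := by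
    haveI : CompactSpace K := isCompact_iff_compactSpace.mp hKc
    have hTK : Continuous fun k : K => (⟨T k, mem_image_of_mem T k.2⟩ : T '' K) := by
      apply Continuous.subtype_mk
      exact hTcont.comp_continuous continuous_subtype_val fun k => k.2
    let e : K ≃ (T '' K) := Equiv.ofBijective (fun k => ⟨T k, mem_image_of_mem T k.2⟩)
      ⟨fun a b hab => Subtype.ext (hTinj a.2 b.2 (congrArg Subtype.val hab)),
       by rintro ⟨ζ, z, hz, rfl⟩; exact ⟨⟨z, hz⟩, rfl⟩⟩
    have he : Continuous e := hTK
    let homeo := Continuous.homeoOfEquivCompactToT2 (f := e) he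
    rw [continuousOn_iff_continuous_restrict]
    have hrestr : (T '' K).domRestrict g = Subtype.val ∘ homeo.symm := by
      funext ζ
      have h1 : T ((homeo.symm ζ : K) : ℂ) = (ζ : ℂ) :=
        congrArg Subtype.val (homeo.apply_symm_apply ζ)
      simp only [Set.domRestrict_apply, Function.comp_apply]
      rw [← h1, hgT _ (homeo.symm ζ).2]
    rw [hrestr]
    exact continuous_subtype_val.comp homeo.symm.continuous
  -- continuity of S on T '' K
  have hScont : ContinuousOn (fun ζ => conj' (T (conj' (g ζ)))) (T '' K) := by
    have h1 : ContinuousOn (fun ζ => conj' (g ζ)) (T '' K) :=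
      Complex.continuous_conj.comp_continuousOn hgcont
    have hmaps : Set.MapsTo (fun ζ => conj' (g ζ)) (T '' K) U := by
      intro ζ hζ
      have hk := (hgK ζ hζ).1
      apply hUsub
      rw [mem_closedBall_zero_iff]
      rw [RCLike.norm_conj]
      exact hk.1
    have h2 : ContinuousOn (fun ζ => T (conj' (g ζ))) (T '' K) :=
      hThol.continuousOn.comp h1 hmaps
    exact Complex.continuous_conj.comp_continuousOn h2
  have hΩsub : T '' D ⊆ T '' K := image_mono hDK
  have hΓsub : (fun x : ℝ => T (x : ℂ)) '' Set.Ioo (-η) η ⊆ T '' K := by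
    rintro ζ ⟨x, hx, rfl⟩
    refine ⟨(x : ℂ), ⟨?_, by simp⟩, rfl⟩
    rw [Complex.norm_real, Real.norm_eq_abs, abs_le]
    exact ⟨hx.1.le, hx.2.le⟩
  -- Part 1: differentiability on Ω
  have part1 : DifferentiableOn ℂ (fun ζ => conj' (T (conj' (g ζ)))) (T '' D) := by
    rintro ζ₀ ⟨z, hz, rfl⟩
    have hDopen : IsOpen D := by
      have : D = {z : ℂ | ‖z‖ < η} ∩ {z : ℂ | 0 < z.im} := rfl
      rw [this]
      exact (isOpen_lt continuous_norm continuous_const).inter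
        (isOpen_lt continuous_const Complex.continuous_im)
    have hDz : D ∈ 𝓝 z := hDopen.mem_nhds hz
    have hTan : AnalyticAt ℂ T z := hThol.analyticAt (hUopen.mem_nhds (hKU (hDK hz)))
    have hd0 : deriv T z ≠ 0 :=
      deriv_ne_zero_of_injOn hTan hDz (hTinj.mono hDK)
    have hstrict : HasStrictDerivAt T (deriv T z) z :=
      (hTan.contDiffAt (n := 1)).hasStrictDerivAt one_ne_zero
    set F := hstrict.hasStrictFDerivAt_equiv hd0 with hFdef
    set ψ := F.localInverse T _ z with hψdef
    have hψim : ψ (T z) = z := F.localInverse_apply_image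
    have hψtend : Filter.Tendsto ψ (𝓝 (T z)) (𝓝 z) := F.localInverse_tendsto
    have hright : ∀ᶠ ζ in 𝓝 (T z), T (ψ ζ) = ζ := F.eventually_right_inverse
    have hψD : ∀ᶠ ζ in 𝓝 (T z), ψ ζ ∈ D := hψtend hDz
    have hgψ : (fun ζ => conj' (T (conj' (g ζ)))) =ᶠ[𝓝 (T z)]
        (fun ζ => conj' (T (conj' (ψ ζ)))) := by
      filter_upwards [hright, hψD] with ζ h1 h2
      have h3 : g ζ = ψ ζ := by
        conv_lhs => rw [← h1]
        exact hgT _ (hDK h2)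
      rw [h3]
    have hconjz : conj' z ∈ U := hUsub (by
      rw [mem_closedBall_zero_iff, RCLike.norm_conj]
      exact hz.1.le)
    have hTd : HasDerivAt T (deriv T (conj' z)) (conj' z) :=
      (hThol.differentiableAt (hUopen.mem_nhds hconjz)).hasDerivAt
    have hA : HasDerivAt (fun w => conj' (T (conj' w))) (conj' (deriv T (conj' z))) z :=
      hasDerivAt_conj_comp hTd
    have hψdiff : DifferentiableAt ℂ ψ (T z) := F.to_localInverse.differentiableAt
    have hAψ : DifferentiableAt ℂ (fun w => conj' (T (conj' w))) (ψ (T z)) := by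
      rw [hψim]; exact hA.differentiableAt
    have hdiffψ : DifferentiableAt ℂ (fun ζ => conj' (T (conj' (ψ ζ)))) (T z) :=
      hAψ.comp (T z) hψdiff
    exact (hdiffψ.congr_of_eventuallyEq hgψ).differentiableWithinAt
  exact ⟨part1, hScont.mono (Set.union_subset hΩsub hΓsub), part3⟩
end
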